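/- arXiv:2111.06543 — 7 statements merged into one kernel-verified Lean document; each statement's English description precedes it below -/
import Mathlib

section
/- Let δ > 0 and let M : ℝ × ℝ → ℝ be a smoothed maximum function as in the context. Then: (a) max(u,v) ≤ M(u,v) ≤ max(u,v) + δ for all u, v ∈ ℝ; (b) M is nondecreasing in each of its two variables; (c) the partial derivatives satisfy 0 ≤ ∂M/∂u(u,v) ≤ 1 and 0 ≤ ∂M/∂v(u,v) ≤ 1 at every point; (d) ∂M/∂u(u,v) + ∂M/∂v(u,v) = 1 at every point. -/
section Aux

variable {δ : ℝ} {M : ℝ × ℝ → ℝ}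

/-- Convexity of `t ↦ M (t, v)`. -/
lemma aux_convex1 (hM_convex : ConvexOn ℝ Set.univ M) (v : ℝ) :
    ConvexOn ℝ Set.univ (fun t : ℝ => M (t, v)) := by
  refine ⟨convex_univ, fun x _ y _ a b ha hb hab => ?_⟩
  have h := hM_convex.2 (Set.mem_univ (x, v)) (Set.mem_univ (y, v)) ha hb hab
  have hv : a * v + b * v = v := by rw [← add_mul, hab, one_mul]
  have heq : a • ((x : ℝ), v) + b • (y, v) = ((a • x + b • y : ℝ), v) := by
    rw [Prod.smul_mk, Prod.smul_mk, Prod.mk_add_mk]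
    simp [smul_eq_mul, hv]
  rw [heq] at h
  simpa using h

lemma aux_lower (hδ : 0 < δ)
    (hM_max : ∀ u v : ℝ, δ ≤ |u - v| → M (u, v) = max u v)
    (hM_convex : ConvexOn ℝ Set.univ M) (u v : ℝ) :
    max u v ≤ M (u, v) := by
  have hg := aux_convex1 hM_convex v
  -- values far right: g r = r ; far left: g s = v
  have hr : ∀ r : ℝ, v + δ ≤ r → M (r, v) = r := by
    intro r hrv
    rw [hM_max r v (by rw [abs_of_nonneg (by linarith)]; linarith)]
    exact max_eq_left (by linarith)
  have hs : ∀ s : ℝ, s ≤ v - δ → M (s, v) = v := by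
    intro s hsv
    rw [hM_max s v (by rw [abs_of_nonpos (by linarith)]; linarith)]
    exact max_eq_right (by linarith)
  rw [max_le_iff]
  constructor
  · -- u ≤ M (u, v)
    set r1 := max u v + δ with hr1
    have hur1 : u < r1 := by have := le_max_left u v; simp [hr1]; linarith
    have h1 := hg.slope_mono_adjacent (Set.mem_univ u) (Set.mem_univ (r1 + 1))
      hur1 (by linarith)
    have e1 : M (r1, v) = r1 := hr r1 (by have := le_max_right u v; linarith)
    have e2 : M (r1 + 1, v) = r1 + 1 := hr (r1 + 1) (by have := le_max_right u v; linarith)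
    simp only [e1, e2] at h1
    have h2 : (r1 + 1 - r1) / (r1 + 1 - r1) = 1 := by norm_num
    rw [show (r1 + 1 - r1 : ℝ) = 1 by ring] at h1
    have hpos : (0:ℝ) < r1 - u := by linarith
    have := (div_le_one hpos).mp (by simpa using h1)
    linarith
  · -- v ≤ M (u, v)
    set s2 := min u v - δ with hs2
    have hs2u : s2 < u := by have := min_le_left u v; simp [hs2]; linarith
    have h1 := hg.slope_mono_adjacent (Set.mem_univ (s2 - 1)) (Set.mem_univ u)
      (by linarith) hs2u
    have e1 : M (s2 - 1, v) = v := hs (s2 - 1) (by have := min_le_right u v; linarith)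
    have e2 : M (s2, v) = v := hs s2 (by have := min_le_right u v; linarith)
    simp only [e1, e2] at h1
    rw [sub_self, zero_div] at h1
    have hpos : (0:ℝ) < u - s2 := by linarith
    rcases div_nonneg_iff.mp h1 with ⟨h, _⟩ | ⟨_, h⟩ <;> linarith

lemma aux_mono1 (hδ : 0 < δ)
    (hM_max : ∀ u v : ℝ, δ ≤ |u - v| → M (u, v) = max u v)
    (hM_convex : ConvexOn ℝ Set.univ M) :
    ∀ u u' v : ℝ, u ≤ u' → M (u, v) ≤ M (u', v) := by
  intro u u' v huu
  rcases eq_or_lt_of_le huu with rfl | hlt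
  · exact le_refl _
  have hg := aux_convex1 hM_convex v
  have hs : ∀ s : ℝ, s ≤ v - δ → M (s, v) = v := by
    intro s hsv
    rw [hM_max s v (by rw [abs_of_nonpos (by linarith)]; linarith)]
    exact max_eq_right (by linarith)
  set s2 := min u (v - δ) - 1 with hs2
  have hs2u : s2 < u := by have := min_le_left u (v - δ); simp [hs2]; linarith
  have e1 : M (s2 - 1, v) = v := hs _ (by have := min_le_right u (v - δ); linarith)
  have e2 : M (s2, v) = v := hs _ (by have := min_le_right u (v - δ); linarith)
  have h1 := hg.slope_mono_adjacent (Set.mem_univ (s2 - 1)) (Set.mem_univ u)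
    (by linarith) hs2u
  have h2 := hg.slope_mono_adjacent (Set.mem_univ s2) (Set.mem_univ u')
    hs2u hlt
  simp only [e1, e2] at h1 h2
  rw [sub_self, zero_div] at h1
  have h3 : (0:ℝ) ≤ (M (u', v) - M (u, v)) / (u' - u) := le_trans h1 h2
  have hpos : (0:ℝ) < u' - u := by linarith
  rcases div_nonneg_iff.mp h3 with ⟨h, _⟩ | ⟨_, h⟩ <;> linarith

end Aux

/-- Basic properties of a smoothed maximum function `M`:
it lies between `max` and `max + δ`, is nondecreasing in each variable,
its partial derivatives lie in `[0,1]`, and they sum to `1`. -/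
theorem stmt_0 (δ : ℝ) (hδ : 0 < δ) (M : ℝ × ℝ → ℝ)
    (hM_smooth : ContDiff ℝ (⊤ : ℕ∞) M)
    (hM_convex : ConvexOn ℝ Set.univ M)
    (hM_max : ∀ u v : ℝ, δ ≤ |u - v| → M (u, v) = max u v)
    (hM_shift : ∀ u v a : ℝ, M (u + a, v + a) = M (u, v) + a)
    (hM_symm : ∀ u v : ℝ, M (u, v) = M (v, u)) :
    (∀ u v : ℝ, max u v ≤ M (u, v) ∧ M (u, v) ≤ max u v + δ) ∧
    (∀ u u' v : ℝ, u ≤ u' → M (u, v) ≤ M (u', v)) ∧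
    (∀ u v v' : ℝ, v ≤ v' → M (u, v) ≤ M (u, v')) ∧
    (∀ u v : ℝ,
      0 ≤ fderiv ℝ M (u, v) (1, 0) ∧ fderiv ℝ M (u, v) (1, 0) ≤ 1 ∧
      0 ≤ fderiv ℝ M (u, v) (0, 1) ∧ fderiv ℝ M (u, v) (0, 1) ≤ 1) ∧
    (∀ u v : ℝ, fderiv ℝ M (u, v) (1, 0) + fderiv ℝ M (u, v) (0, 1) = 1) := by
  have mono1 : ∀ u u' v : ℝ, u ≤ u' → M (u, v) ≤ M (u', v) :=
    aux_mono1 hδ hM_max hM_convex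
  have mono2 : ∀ u v v' : ℝ, v ≤ v' → M (u, v) ≤ M (u, v') := by
    intro u v v' h
    rw [hM_symm u v, hM_symm u v']
    exact mono1 v v' u h
  -- M(0,0) ≤ δ
  have hM00 : M (0, 0) ≤ δ := by
    have h := hM_convex.2 (Set.mem_univ ((δ : ℝ), -δ)) (Set.mem_univ ((-δ : ℝ), δ))
      (by norm_num : (0:ℝ) ≤ 1/2) (by norm_num : (0:ℝ) ≤ 1/2) (by norm_num)
    have hmid : (1/2 : ℝ) • ((δ : ℝ), -δ) + (1/2 : ℝ) • ((-δ : ℝ), δ) = ((0:ℝ), (0:ℝ)) := by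
      rw [Prod.smul_mk, Prod.smul_mk, Prod.mk_add_mk, Prod.mk.injEq]
      constructor <;> simp [smul_eq_mul]
    rw [hmid] at h
    have h1 : M (δ, -δ) = δ := by
      rw [hM_max δ (-δ) (by rw [abs_of_nonneg (by linarith)]; linarith)]
      exact max_eq_left (by linarith)
    have h2 : M (-δ, δ) = δ := by
      rw [hM_max (-δ) δ (by rw [abs_of_nonpos (by linarith)]; linarith)]
      exact max_eq_right (by linarith)
    rw [h1, h2] at h
    simp only [smul_eq_mul] at h
    linarith
  have bounds : ∀ u v : ℝ, max u v ≤ M (u, v) ∧ M (u, v) ≤ max u v + δ := by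
    have upper : ∀ u v : ℝ, v ≤ u → M (u, v) ≤ u + δ := by
      intro u v hvu
      calc M (u, v) ≤ M (u, u) := mono2 u v u hvu
        _ = M (0, 0) + u := by have := hM_shift 0 0 u; simpa using this
        _ ≤ u + δ := by linarith
    intro u v
    refine ⟨aux_lower hδ hM_max hM_convex u v, ?_⟩
    rcases le_total v u with h | h
    · rw [max_eq_left h]; exact upper u v h
    · rw [max_eq_right h, hM_symm]; exact upper v u h
  -- derivative facts
  have hdiff : Differentiable ℝ M := hM_smooth.differentiable (by simp)
  have key : ∀ u v : ℝ,
      HasDerivAt (fun t => M (u + t, v)) (fderiv ℝ M (u, v) (1, 0)) 0 ∧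
      HasDerivAt (fun t => M (u, v + t)) (fderiv ℝ M (u, v) (0, 1)) 0 ∧
      HasDerivAt (fun t => M (u + t, v + t)) (fderiv ℝ M (u, v) (1, 1)) 0 := by
    intro u v
    have hF : HasFDerivAt M (fderiv ℝ M (u, v)) (u, v) := (hdiff (u, v)).hasFDerivAt
    have c1 : HasDerivAt (fun t : ℝ => u + t) 1 0 := (hasDerivAt_id 0).const_add u
    have c2 : HasDerivAt (fun t : ℝ => v + t) 1 0 := (hasDerivAt_id 0).const_add v
    have k1 : HasDerivAt (fun t : ℝ => ((u + t : ℝ), v)) ((1 : ℝ), (0 : ℝ)) 0 :=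
      c1.prodMk (hasDerivAt_const 0 v)
    have k2 : HasDerivAt (fun t : ℝ => ((u : ℝ), v + t)) ((0 : ℝ), (1 : ℝ)) 0 :=
      (hasDerivAt_const (0:ℝ) u).prodMk c2
    have k3 : HasDerivAt (fun t : ℝ => ((u + t : ℝ), v + t)) ((1 : ℝ), (1 : ℝ)) 0 :=
      c1.prodMk c2
    have h0 : ((u + (0:ℝ)), v) = ((u : ℝ), v) := by norm_num
    have h0' : ((u : ℝ), v + (0:ℝ)) = ((u : ℝ), v) := by norm_num
    have h0'' : ((u + (0:ℝ)), v + (0:ℝ)) = ((u : ℝ), v) := by norm_num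
    refine ⟨?_, ?_, ?_⟩
    · have := HasFDerivAt.comp_hasDerivAt 0 (h0 ▸ hF) k1
      simpa [Function.comp_def] using this
    · have := HasFDerivAt.comp_hasDerivAt 0 (h0' ▸ hF) k2
      simpa [Function.comp_def] using this
    · have := HasFDerivAt.comp_hasDerivAt 0 (h0'' ▸ hF) k3
      simpa [Function.comp_def] using this
  have sum1 : ∀ u v : ℝ, fderiv ℝ M (u, v) (1, 0) + fderiv ℝ M (u, v) (0, 1) = 1 := by
    intro u v
    have h3 := (key u v).2.2
    have h4 : HasDerivAt (fun t : ℝ => M (u + t, v + t)) 1 0 := by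
      have : (fun t : ℝ => M (u + t, v + t)) = fun t => M (u, v) + t := by
        funext t; exact hM_shift u v t
      rw [this]
      exact (hasDerivAt_id 0).const_add _
    have h5 : fderiv ℝ M (u, v) (1, 1) = 1 := h3.unique h4
    have h6 : ((1:ℝ), (0:ℝ)) + ((0:ℝ), (1:ℝ)) = ((1:ℝ), (1:ℝ)) := by
      rw [Prod.mk_add_mk]; norm_num
    rw [← map_add, h6, h5]
  -- nonneg of directional derivative from monotonicity
  have nn : ∀ (g : ℝ → ℝ) (c : ℝ), Monotone g → HasDerivAt g c 0 → 0 ≤ c := by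
    intro g c hmono hder
    rw [hasDerivAt_iff_tendsto_slope] at hder
    refine ge_of_tendsto hder ?_
    filter_upwards [self_mem_nhdsWithin] with t ht
    simp only [Set.mem_compl_iff, Set.mem_singleton_iff] at ht
    rw [slope_def_field]
    rcases lt_or_gt_of_ne ht with h | h
    · exact div_nonneg_iff.mpr (Or.inr ⟨by have := hmono h.le; linarith, by linarith⟩)
    · exact div_nonneg_iff.mpr (Or.inl ⟨by have := hmono h.le; linarith, by linarith⟩)
  have nn1 : ∀ u v : ℝ, 0 ≤ fderiv ℝ M (u, v) (1, 0) := by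
    intro u v
    refine nn _ _ (fun a b hab => mono1 _ _ _ (by linarith)) (key u v).1
  have nn2 : ∀ u v : ℝ, 0 ≤ fderiv ℝ M (u, v) (0, 1) := by
    intro u v
    refine nn _ _ (fun a b hab => mono2 _ _ _ (by linarith)) (key u v).2.1
  exact ⟨bounds, mono1, mono2, fun u v => ⟨nn1 u v, by have := sum1 u v; have := nn2 u v; linarith,
    nn2 u v, by have := sum1 u v; have := nn1 u v; linarith⟩, sum1⟩
end

section
/- Let δ > 0, let M be a smoothed maximum function as in the context, let N ≥ 2 be an integer, and define m : ℝ^N → ℝ by m(u₁,…,u_N) = −(1/N!) · Σ_{σ ∈ S_N} M(−u_{σ(1)}, M(−u_{σ(2)}, …, M(−u_{σ(N−1)}, −u_{σ(N)})⋯)). Then: (a) m is concave; (b) m is symmetric under all permutations of its arguments; (c) m(u₁+a,…,u_N+a) = m(u₁,…,u_N) + a for all a ∈ ℝ; (d) min(u₁,…,u_N) − Nδ ≤ m(u₁,…,u_N) ≤ min(u₁,…,u_N) for all u; (e) if there is an index i₀ with u_j ≥ u_{i₀} + Nδ for every j ≠ i₀, then m(u₁,…,u_N) = u_{i₀} = min(u₁,…,u_N).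 -/
/-- The nested application `M(x₁, M(x₂, …, M(x_{N-1}, x_N)⋯))` of a two-variable
function `M` to a list of reals. -/
noncomputable def nestM (M : ℝ × ℝ → ℝ) : List ℝ → ℝ
  | [] => 0
  | [x] => x
  | x :: y :: xs => M (x, nestM M (y :: xs))

section SmoothedMaxAux

variable {δ : ℝ} {M : ℝ × ℝ → ℝ}

lemma M_bounds (hδ : 0 < δ) (hconv : ConvexOn ℝ Set.univ M)
    (hmax : ∀ u v : ℝ, δ ≤ |u - v| → M (u, v) = max u v) (u v : ℝ) :
    max u v ≤ M (u, v) ∧ M (u, v) ≤ max u v + δ := by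
  by_cases h : δ ≤ |u - v|
  · rw [hmax u v h]; exact ⟨le_rfl, by linarith⟩
  push_neg at h
  rw [abs_sub_lt_iff] at h
  have hu : u ≤ M (u, v) := by
    have hc := hconv.2 (Set.mem_univ (u, v)) (Set.mem_univ (2*(v+δ) - u, v))
      (by norm_num : (0:ℝ) ≤ 1/2) (by norm_num : (0:ℝ) ≤ 1/2) (by norm_num)
    have hpt : (1/2 : ℝ) • ((u, v) : ℝ × ℝ) + (1/2 : ℝ) • ((2*(v+δ) - u, v) : ℝ × ℝ)
        = ((v + δ, v) : ℝ × ℝ) := by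
      simp only [Prod.smul_mk, smul_eq_mul, Prod.mk_add_mk, Prod.mk.injEq]
      constructor <;> ring
    rw [hpt] at hc
    have h1 : M (v + δ, v) = v + δ := by
      rw [hmax _ _ (by rw [show v + δ - v = δ by ring, abs_of_pos hδ]),
        max_eq_left (by linarith)]
    have h2 : M (2*(v+δ) - u, v) = 2*(v+δ) - u := by
      rw [hmax _ _ (by rw [abs_of_pos (by linarith)]; linarith),
        max_eq_left (by linarith)]
    rw [h1, h2] at hc
    simp only [smul_eq_mul] at hc
    linarith
  have hv : v ≤ M (u, v) := by
    have hc := hconv.2 (Set.mem_univ (u, v)) (Set.mem_univ (2*(v-δ) - u, v))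
      (by norm_num : (0:ℝ) ≤ 1/2) (by norm_num : (0:ℝ) ≤ 1/2) (by norm_num)
    have hpt : (1/2 : ℝ) • ((u, v) : ℝ × ℝ) + (1/2 : ℝ) • ((2*(v-δ) - u, v) : ℝ × ℝ)
        = ((v - δ, v) : ℝ × ℝ) := by
      simp only [Prod.smul_mk, smul_eq_mul, Prod.mk_add_mk, Prod.mk.injEq]
      constructor <;> ring
    rw [hpt] at hc
    have h1 : M (v - δ, v) = v := by
      rw [hmax _ _ (by rw [show v - δ - v = -δ by ring, abs_neg, abs_of_pos hδ]),
        max_eq_right (by linarith)]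
    have h2 : M (2*(v-δ) - u, v) = v := by
      rw [hmax _ _ (by rw [abs_sub_comm, abs_of_pos (by linarith)]; linarith),
        max_eq_right (by linarith)]
    rw [h1, h2] at hc
    simp only [smul_eq_mul] at hc
    linarith
  have hup : M (u, v) ≤ max u v + δ := by
    set a : ℝ := (v + δ - u) / (2*δ) with ha
    set b : ℝ := (u - (v - δ)) / (2*δ) with hb
    have ha0 : 0 ≤ a := by apply div_nonneg <;> linarith
    have hb0 : 0 ≤ b := by apply div_nonneg <;> linarith
    have hab : a + b = 1 := by rw [ha, hb]; field_simp; ring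
    have hb1 : b = 1 - a := by linarith
    have hc := hconv.2 (Set.mem_univ (v - δ, v)) (Set.mem_univ (v + δ, v)) ha0 hb0 hab
    have hpt : a • ((v - δ, v) : ℝ × ℝ) + b • ((v + δ, v) : ℝ × ℝ) = ((u, v) : ℝ × ℝ) := by
      simp only [Prod.smul_mk, smul_eq_mul, Prod.mk_add_mk, Prod.mk.injEq]
      constructor
      · rw [hb1, ha]; field_simp; ring
      · rw [hb1]; ring
    rw [hpt] at hc
    have h1 : M (v - δ, v) = v := by
      rw [hmax _ _ (by rw [show v - δ - v = -δ by ring, abs_neg, abs_of_pos hδ]),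
        max_eq_right (by linarith)]
    have h2 : M (v + δ, v) = v + δ := by
      rw [hmax _ _ (by rw [show v + δ - v = δ by ring, abs_of_pos hδ]),
        max_eq_left (by linarith)]
    rw [h1, h2] at hc
    simp only [smul_eq_mul] at hc
    have hadel : 0 ≤ a * δ := mul_nonneg ha0 hδ.le
    have hid : a * v + b * (v + δ) = v + δ - a * δ := by rw [hb1]; ring
    calc M (u, v) ≤ a * v + b * (v + δ) := hc
      _ ≤ v + δ := by linarith
      _ ≤ max u v + δ := by simp [le_max_iff]
  exact ⟨max_le hu hv, hup⟩

lemma M_mono (hδ : 0 < δ) (hconv : ConvexOn ℝ Set.univ M)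
    (hmax : ∀ u v : ℝ, δ ≤ |u - v| → M (u, v) = max u v) (a : ℝ) :
    Monotone fun t => M (a, t) := by
  intro s t hst
  rcases eq_or_lt_of_le hst with rfl | hlt
  · exact le_rfl
  set p : ℝ := min s (a - δ) - 1 with hp
  have hps : p < s := by have := min_le_left s (a - δ); simp only [hp]; linarith
  have hpa : p ≤ a - δ - 1 := by have := min_le_right s (a - δ); simp only [hp]; linarith
  have hMp : M (a, p) = a := by
    rw [hmax _ _ (by rw [abs_of_pos (by linarith)]; linarith), max_eq_left (by linarith)]
  set lam : ℝ := (t - s) / (t - p) with hlam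
  have htp : 0 < t - p := by linarith
  have hl0 : 0 < lam := div_pos (by linarith) htp
  have hl1 : lam < 1 := by rw [hlam, div_lt_one htp]; linarith
  have hc := hconv.2 (Set.mem_univ (a, p)) (Set.mem_univ (a, t)) hl0.le
    (by linarith : (0:ℝ) ≤ 1 - lam) (by ring)
  have hpt : lam • ((a, p) : ℝ × ℝ) + (1 - lam) • ((a, t) : ℝ × ℝ) = ((a, s) : ℝ × ℝ) := by
    simp only [Prod.smul_mk, smul_eq_mul, Prod.mk_add_mk, Prod.mk.injEq]
    constructor
    · ring
    · rw [hlam]; field_simp; ring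
  rw [hpt, hMp] at hc
  simp only [smul_eq_mul] at hc
  have hga : a ≤ M (a, s) :=
    le_trans (le_max_left _ _) (M_bounds hδ hconv hmax a s).1
  nlinarith

lemma nestM_cons (M : ℝ × ℝ → ℝ) (a : ℝ) (l : List ℝ) (hl : l ≠ []) :
    nestM M (a :: l) = M (a, nestM M l) := by
  cases l with
  | nil => exact absurd rfl hl
  | cons y ys => rfl

lemma nest_ge (hMb : ∀ u v : ℝ, max u v ≤ M (u, v)) :
    ∀ (l : List ℝ), ∀ z ∈ l, z ≤ nestM M l
  | [], z, hz => absurd hz List.not_mem_nil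
  | [x], z, hz => by simp only [List.mem_singleton] at hz; simp [nestM, hz]
  | x :: y :: xs, z, hz => by
    rcases List.mem_cons.1 hz with rfl | hz'
    · exact le_trans (le_max_left _ _) (hMb _ _)
    · exact le_trans (le_trans (nest_ge hMb (y :: xs) z hz') (le_max_right _ _)) (hMb _ _)

lemma nest_le (hδ : 0 < δ) (hMb : ∀ u v : ℝ, M (u, v) ≤ max u v + δ) :
    ∀ (l : List ℝ), l ≠ [] → ∀ y : ℝ, (∀ z ∈ l, z ≤ y) →
      nestM M l ≤ y + ((l.length : ℝ) - 1) * δ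
  | [], h, _, _ => absurd rfl h
  | [x], _, y, h => by
    have := h x (by simp)
    simpa [nestM] using this
  | x :: z :: xs, _, y, h => by
    have ih := nest_le hδ hMb (z :: xs) (by simp) y (fun w hw => h w (by simp [hw]))
    have hx : x ≤ y := h x (by simp)
    have h1 : M (x, nestM M (z :: xs)) ≤ max x (nestM M (z :: xs)) + δ := hMb _ _
    have hlen : (0:ℝ) ≤ (xs.length : ℝ) := Nat.cast_nonneg _
    have hmax : max x (nestM M (z :: xs)) ≤ y + (xs.length : ℝ) * δ := by
      apply max_le
      · nlinarith
      · simp only [List.length_cons] at ih; push_cast at ih ⊢; linarith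
    show M (x, nestM M (z :: xs)) ≤ y + (((x :: z :: xs).length : ℝ) - 1) * δ
    simp only [List.length_cons]
    push_cast
    linarith

lemma nest_shift (hsh : ∀ u v a : ℝ, M (u + a, v + a) = M (u, v) + a) :
    ∀ (l : List ℝ), l ≠ [] → ∀ a : ℝ,
      nestM M (l.map (· + a)) = nestM M l + a
  | [], h, _ => absurd rfl h
  | [x], _, a => by simp [nestM]
  | x :: z :: xs, _, a => by
    have ih := nest_shift hsh (z :: xs) (by simp) a
    rw [List.map_cons, nestM_cons M _ _ (by simp), ih, hsh, nestM_cons M x (z :: xs) (by simp)]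

lemma nest_split (hδ : 0 < δ)
    (hMb : ∀ u v : ℝ, max u v ≤ M (u, v) ∧ M (u, v) ≤ max u v + δ)
    (hmax : ∀ u v : ℝ, δ ≤ |u - v| → M (u, v) = max u v) :
    ∀ (l₁ l₂ : List ℝ) (x : ℝ),
      (∀ y ∈ l₁ ++ l₂, y + ((l₁.length + l₂.length + 1 : ℕ) : ℝ) * δ ≤ x) →
      nestM M (l₁ ++ x :: l₂) = x
  | [], l₂, x, h => by
    cases l₂ with
    | nil => simp [nestM]
    | cons z zs =>
      have hub : ∀ y ∈ z :: zs, y ≤ x - ((zs.length + 2 : ℕ) : ℝ) * δ := by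
        intro y hy
        have := h y (by simpa using hy)
        simp only [List.length_nil, List.length_cons] at this ⊢
        push_cast at this ⊢
        linarith
      have hle : nestM M (z :: zs) ≤ x - 2 * δ := by
        have := nest_le hδ (fun u v => (hMb u v).2) (z :: zs) (by simp)
          (x - ((zs.length + 2 : ℕ) : ℝ) * δ) hub
        simp only [List.length_cons] at this
        push_cast at this
        linarith
      rw [show ([] : List ℝ) ++ x :: z :: zs = x :: z :: zs by simp,
        nestM_cons M x (z :: zs) (by simp),
        hmax _ _ (by rw [abs_of_pos (by linarith)]; linarith),
        max_eq_left (by linarith)]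
  | a :: l₁, l₂, x, h => by
    have ha := h a (by simp)
    have ih := nest_split hδ hMb hmax l₁ l₂ x (by
      intro y hy
      have := h y (by simp [List.mem_append] at hy ⊢; tauto)
      simp only [List.length_cons] at this
      push_cast at this ⊢
      nlinarith [hδ.le])
    have hax : a + 2 * δ ≤ x := by
      push_cast [List.length_cons] at ha
      nlinarith [Nat.cast_nonneg (α := ℝ) (l₁.length), Nat.cast_nonneg (α := ℝ) (l₂.length)]
    rw [List.cons_append, nestM_cons M a (l₁ ++ x :: l₂) (by simp), ih,
      hmax a x (by rw [abs_sub_comm, abs_of_nonneg (by linarith)]; linarith),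
      max_eq_right (by linarith)]

lemma nest_convex {n : ℕ} (hconv : ConvexOn ℝ Set.univ M)
    (hmono : ∀ a : ℝ, Monotone fun t => M (a, t)) :
    ∀ (fs : List ((Fin n → ℝ) → ℝ)), fs ≠ [] →
      (∀ φ ∈ fs, ∀ (u v : Fin n → ℝ) (a b : ℝ), φ (a • u + b • v) = a * φ u + b * φ v) →
      ConvexOn ℝ Set.univ (fun u => nestM M (fs.map (fun φ => φ u)))
  | [], h, _ => absurd rfl h
  | [φ], _, hlin => by
    refine ⟨convex_univ, ?_⟩
    intro u _ v _ a b ha hb hab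
    simp only [List.map_cons, List.map_nil, nestM, smul_eq_mul]
    exact le_of_eq (hlin φ (by simp) u v a b)
  | φ :: ψ :: fs, _, hlin => by
    have ihg : ConvexOn ℝ Set.univ
        (fun u => nestM M ((ψ :: fs).map (fun φ => φ u))) :=
      nest_convex hconv hmono (ψ :: fs) (by simp)
        (fun χ hχ => hlin χ (by simp [hχ]))
    refine ⟨convex_univ, ?_⟩
    intro u _ v _ a b ha hb hab
    set g : (Fin n → ℝ) → ℝ := fun u => nestM M ((ψ :: fs).map (fun φ => φ u)) with hg
    have hshow : ∀ w : Fin n → ℝ,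
        nestM M ((φ :: ψ :: fs).map (fun χ => χ w)) = M (φ w, g w) := by
      intro w; simp only [List.map_cons]; rfl
    simp only [hshow, smul_eq_mul]
    have hglin : g (a • u + b • v) ≤ a * g u + b * g v := by
      have := ihg.2 (Set.mem_univ u) (Set.mem_univ v) ha hb hab
      simpa [smul_eq_mul] using this
    have hphi : φ (a • u + b • v) = a * φ u + b * φ v := hlin φ (by simp) u v a b
    calc M (φ (a • u + b • v), g (a • u + b • v))
        ≤ M (φ (a • u + b • v), a * g u + b * g v) := hmono _ hglin
      _ = M (a • (φ u, g u) + b • (φ v, g v)) := by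
          rw [hphi]
          simp only [Prod.smul_mk, smul_eq_mul, Prod.mk_add_mk]
      _ ≤ a * M (φ u, g u) + b * M (φ v, g v) := by
          have := hconv.2 (Set.mem_univ (φ u, g u)) (Set.mem_univ (φ v, g v)) ha hb hab
          simpa [smul_eq_mul] using this

end SmoothedMaxAux

/-- Properties of the smoothed minimum
`m(u) = −(1/N!) Σ_{σ ∈ S_N} M(−u_{σ(1)}, M(−u_{σ(2)}, …, M(−u_{σ(N−1)}, −u_{σ(N)})⋯))`:
it is concave, symmetric, equivariant under adding constants, within `Nδ` of the
minimum, and equals the minimum when one entry is smaller than all others by `Nδ`. -/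
theorem stmt_1 (δ : ℝ) (hδ : 0 < δ) (M : ℝ × ℝ → ℝ)
    (hM_smooth : ContDiff ℝ (⊤ : ℕ∞) M)
    (hM_convex : ConvexOn ℝ Set.univ M)
    (hM_max : ∀ u v : ℝ, δ ≤ |u - v| → M (u, v) = max u v)
    (hM_shift : ∀ u v a : ℝ, M (u + a, v + a) = M (u, v) + a)
    (hM_symm : ∀ u v : ℝ, M (u, v) = M (v, u))
    (N : ℕ) (hN : 2 ≤ N)
    (m : (Fin N → ℝ) → ℝ)
    (hm : ∀ u : Fin N → ℝ,
      m u = -(1 / (N.factorial : ℝ)) *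
        ∑ σ : Equiv.Perm (Fin N), nestM M (List.ofFn fun i => -u (σ i))) :
    ConcaveOn ℝ Set.univ m ∧
    (∀ (u : Fin N → ℝ) (σ : Equiv.Perm (Fin N)), m (u ∘ σ) = m u) ∧
    (∀ (u : Fin N → ℝ) (a : ℝ), m (fun i => u i + a) = m u + a) ∧
    (∀ u : Fin N → ℝ,
      Finset.univ.inf' ⟨⟨0, by omega⟩, Finset.mem_univ _⟩ u - N * δ ≤ m u ∧
      m u ≤ Finset.univ.inf' ⟨⟨0, by omega⟩, Finset.mem_univ _⟩ u) ∧
    (∀ (u : Fin N → ℝ) (i₀ : Fin N), (∀ j, j ≠ i₀ → u i₀ + N * δ ≤ u j) →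
      m u = u i₀ ∧ ∀ j, u i₀ ≤ u j) := by
  have hMb := M_bounds hδ hM_convex hM_max
  have hge : ∀ u v : ℝ, max u v ≤ M (u, v) := fun u v => (hMb u v).1
  have hleM : ∀ u v : ℝ, M (u, v) ≤ max u v + δ := fun u v => (hMb u v).2
  have hmono := M_mono hδ hM_convex hM_max
  have hF : (0:ℝ) < (N.factorial : ℝ) := by
    exact_mod_cast Nat.factorial_pos N
  have hcard : (Finset.univ : Finset (Equiv.Perm (Fin N))).card = N.factorial := by
    rw [Finset.card_univ, Fintype.card_perm, Fintype.card_fin]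
  have hlenN : ∀ (u : Fin N → ℝ) (σ : Equiv.Perm (Fin N)),
      (List.ofFn fun i => -u (σ i)).length = N := fun u σ => List.length_ofFn
  have hnenil : ∀ (u : Fin N → ℝ) (σ : Equiv.Perm (Fin N)),
      (List.ofFn fun i => -u (σ i)) ≠ [] := by
    intro u σ h
    have := hlenN u σ
    rw [h] at this
    simp at this
    omega
  refine ⟨?_, ?_, ?_, ?_, ?_⟩
  · -- concavity
    have hterm : ∀ σ : Equiv.Perm (Fin N),
        ConvexOn ℝ Set.univ (fun u : Fin N → ℝ => nestM M (List.ofFn fun i => -u (σ i))) := by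
      intro σ
      have := nest_convex hM_convex hmono
        (List.ofFn fun i => (fun u : Fin N → ℝ => -u (σ i)))
        (by intro h; have := List.length_ofFn (f := fun i => (fun u : Fin N → ℝ => -u (σ i)));
            rw [h] at this; simp at this; omega)
        (by
          intro φ hφ
          rw [List.mem_ofFn] at hφ
          obtain ⟨i, rfl⟩ := hφ
          intro u v a b
          simp only [Pi.add_apply, Pi.smul_apply, smul_eq_mul]
          ring)
      have heq : ∀ u : Fin N → ℝ,
          (List.ofFn fun i => (fun u : Fin N → ℝ => -u (σ i))).map (fun φ => φ u)
            = List.ofFn fun i => -u (σ i) := by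
        intro u; rw [List.map_ofFn]; rfl
      simpa only [heq] using this
    have hsum : ConvexOn ℝ Set.univ
        (fun u : Fin N → ℝ => ∑ σ : Equiv.Perm (Fin N),
          nestM M (List.ofFn fun i => -u (σ i))) := by
      classical
      have : ∀ s : Finset (Equiv.Perm (Fin N)), ConvexOn ℝ Set.univ
          (fun u : Fin N → ℝ => ∑ σ ∈ s, nestM M (List.ofFn fun i => -u (σ i))) := by
        intro s
        induction s using Finset.induction with
        | empty => simpa using convexOn_const (0:ℝ) convex_univ
        | @insert σ s hσ ih =>
          simp only [Finset.sum_insert hσ]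
          exact (hterm σ).add ih
      exact this Finset.univ
    have hm' : m = fun u => -((1 / (N.factorial : ℝ)) •
        ∑ σ : Equiv.Perm (Fin N), nestM M (List.ofFn fun i => -u (σ i))) := by
      funext u
      rw [hm u]
      simp only [smul_eq_mul]
      ring
    rw [hm']
    exact (hsum.smul (by positivity)).neg
  · -- symmetry
    intro u σ
    rw [hm, hm]
    congr 1
    exact Fintype.sum_bijective (fun τ => σ * τ) (Group.mulLeft_bijective σ) _ _
      (fun τ => rfl)
  · -- shift
    intro u a
    rw [hm, hm]
    have hterm : ∀ σ : Equiv.Perm (Fin N),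
        nestM M (List.ofFn fun i => -((fun i => u i + a) (σ i)))
          = nestM M (List.ofFn fun i => -u (σ i)) + (-a) := by
      intro σ
      have heq : (List.ofFn fun i => -((fun i => u i + a) (σ i)))
          = (List.ofFn fun i => -u (σ i)).map (· + (-a)) := by
        rw [List.map_ofFn]
        congr 1
        funext i
        simp [Function.comp]
        ring
      rw [heq, nest_shift hM_shift _ (hnenil u σ) (-a)]
    rw [Finset.sum_congr rfl (fun σ _ => hterm σ), Finset.sum_add_distrib,
      Finset.sum_const, hcard]
    simp only [nsmul_eq_mul]
    field_simp
    ring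
  · -- bounds
    intro u
    have hne : (Finset.univ : Finset (Fin N)).Nonempty :=
      ⟨⟨0, by omega⟩, Finset.mem_univ _⟩
    set mn := Finset.univ.inf' hne u with hmndef
    obtain ⟨istar, _, histar⟩ := Finset.exists_mem_eq_inf' hne u
    have hterm : ∀ σ : Equiv.Perm (Fin N),
        -mn ≤ nestM M (List.ofFn fun i => -u (σ i)) ∧
        nestM M (List.ofFn fun i => -u (σ i)) ≤ -mn + ((N:ℝ) - 1) * δ := by
      intro σ
      constructor
      · have hmem : -u istar ∈ List.ofFn fun i => -u (σ i) := by
          rw [List.mem_ofFn]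
          exact ⟨σ.symm istar, by simp⟩
        have := nest_ge hge _ _ hmem
        rw [hmndef, histar]
        exact this
      · have := nest_le hδ hleM _ (hnenil u σ) (-mn) (by
          intro z hz
          rw [List.mem_ofFn] at hz
          obtain ⟨i, rfl⟩ := hz
          have : mn ≤ u (σ i) := Finset.inf'_le _ (Finset.mem_univ _)
          show -u (σ i) ≤ -mn
          linarith)
        rwa [hlenN u σ] at this
    set S := ∑ σ : Equiv.Perm (Fin N), nestM M (List.ofFn fun i => -u (σ i)) with hS
    have hS1 : (N.factorial : ℝ) * (-mn) ≤ S := by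
      have := Finset.card_nsmul_le_sum Finset.univ
        (fun σ : Equiv.Perm (Fin N) => nestM M (List.ofFn fun i => -u (σ i)))
        (-mn) (fun σ _ => (hterm σ).1)
      rwa [hcard, nsmul_eq_mul] at this
    have hS2 : S ≤ (N.factorial : ℝ) * (-mn + ((N:ℝ) - 1) * δ) := by
      have := Finset.sum_le_card_nsmul Finset.univ
        (fun σ : Equiv.Perm (Fin N) => nestM M (List.ofFn fun i => -u (σ i)))
        (-mn + ((N:ℝ) - 1) * δ) (fun σ _ => (hterm σ).2)
      rwa [hcard, nsmul_eq_mul] at this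
    have hmu : m u = -S / (N.factorial : ℝ) := by rw [hm u]; ring
    constructor
    · show mn - (N:ℝ) * δ ≤ m u
      rw [hmu, le_div_iff₀ hF]
      nlinarith [mul_nonneg hF.le hδ.le]
    · show m u ≤ mn
      rw [hmu, div_le_iff₀ hF]
      nlinarith
  · -- exact minimum
    intro u i₀ h
    have hNδ : 0 < (N:ℝ) * δ := by positivity
    have hminall : ∀ j, u i₀ ≤ u j := by
      intro j
      by_cases hj : j = i₀
      · rw [hj]
      · linarith [h j hj]
    have hval : ∀ (σ : Equiv.Perm (Fin N)) (i : Fin N),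
        -u (σ i) = -u i₀ → i = σ.symm i₀ := by
      intro σ i hi
      have hσi : σ i = i₀ := by
        by_contra hne
        have h1 := h _ hne
        linarith
      rw [← hσi, Equiv.symm_apply_apply]
    have hterm : ∀ σ : Equiv.Perm (Fin N),
        nestM M (List.ofFn fun i => -u (σ i)) = -u i₀ := by
      intro σ
      have hx : -u i₀ ∈ List.ofFn fun i => -u (σ i) := by
        rw [List.mem_ofFn]
        exact ⟨σ.symm i₀, by simp⟩
      obtain ⟨s, t, hst⟩ := List.append_of_mem hx
      have hsl : s.length + t.length + 1 = N := by
        have := hlenN u σ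
        rw [hst] at this
        simp [List.length_append] at this
        omega
      have hposval : ∀ (p : ℕ) (hp : p < N),
          (List.ofFn fun i => -u (σ i))[p]'(by rw [hlenN u σ]; exact hp) = -u i₀ →
          p = ((σ.symm i₀ : Fin N) : ℕ) := by
        intro p hp e
        rw [List.getElem_ofFn] at e
        have := hval σ _ e
        exact congrArg Fin.val this
      have hklen : s.length = ((σ.symm i₀ : Fin N) : ℕ) := by
        apply hposval s.length (by omega)
        rw [List.getElem_of_eq hst, List.getElem_append_right (le_refl s.length)]
        simp
      have hnotx : ∀ y ∈ s ++ t, y ≠ -u i₀ := by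
        intro y hy hyx
        rcases List.mem_append.1 hy with hys | hyt
        · obtain ⟨j, hj, e⟩ := List.getElem_of_mem hys
          have : j = ((σ.symm i₀ : Fin N) : ℕ) := by
            apply hposval j (by omega)
            rw [List.getElem_of_eq hst, List.getElem_append_left hj, e, hyx]
          omega
        · obtain ⟨j, hj, e⟩ := List.getElem_of_mem hyt
          have : s.length + 1 + j = ((σ.symm i₀ : Fin N) : ℕ) := by
            apply hposval (s.length + 1 + j) (by omega)
            rw [List.getElem_of_eq hst,
              List.getElem_append_right (by omega : s.length ≤ s.length + 1 + j)]
            have harith : s.length + 1 + j - s.length = j + 1 := by omega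
            simp_rw [harith]
            simp only [List.getElem_cons_succ]
            rw [e, hyx]
          omega
      have happ : ∀ y ∈ s ++ t, y + ((s.length + t.length + 1 : ℕ) : ℝ) * δ ≤ -u i₀ := by
        intro y hy
        have hyl : y ∈ List.ofFn fun i => -u (σ i) := by
          rw [hst]
          rcases List.mem_append.1 hy with hys | hyt
          · exact List.mem_append.2 (Or.inl hys)
          · exact List.mem_append.2 (Or.inr (List.mem_cons_of_mem _ hyt))
        rw [List.mem_ofFn] at hyl
        obtain ⟨i, rfl⟩ := hyl
        have hne : σ i ≠ i₀ := by
          intro hc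
          exact hnotx _ hy (by show -u (σ i) = -u i₀; rw [hc])
        have := h _ hne
        show -u (σ i) + ((s.length + t.length + 1 : ℕ) : ℝ) * δ ≤ -u i₀
        rw [hsl]
        push_cast
        linarith
      rw [hst]
      exact nest_split hδ hMb hM_max s t _ happ
    refine ⟨?_, hminall⟩
    rw [hm u, Finset.sum_congr rfl (fun σ _ => hterm σ), Finset.sum_const, hcard]
    simp only [nsmul_eq_mul]
    field_simp
end

section
/- Let N ≥ 1 be an integer and let A be a real N × N matrix such that A_{ii} ≥ 2 for all i and A_{ij} + A_{ji} = 2 for all i ≠ j. Then vᵀ A v > 0 for every nonzero vector v ∈ ℝ^N; in particular, A is invertible. -/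
/-- If a real `N × N` matrix has diagonal entries `≥ 2` and
`A_{ij} + A_{ji} = 2` for `i ≠ j`, then its quadratic form is positive definite
and `A` is invertible. -/
theorem stmt_2 (N : ℕ) (hN : 1 ≤ N) (A : Matrix (Fin N) (Fin N) ℝ)
    (hdiag : ∀ i, 2 ≤ A i i)
    (hoff : ∀ i j, i ≠ j → A i j + A j i = 2) :
    (∀ v : Fin N → ℝ, v ≠ 0 → 0 < ∑ i, ∑ j, A i j * v i * v j) ∧ IsUnit A := by
  have key : ∀ v : Fin N → ℝ, v ≠ 0 → 0 < ∑ i, ∑ j, A i j * v i * v j := by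
    intro v hv
    have hsym : (2:ℝ) * ∑ i, ∑ j, A i j * v i * v j
        = ∑ i, ∑ j, (A i j + A j i) * v i * v j := by
      rw [Finset.mul_sum]
      have hswap : ∑ i, ∑ j, A i j * v i * v j = ∑ i, ∑ j, A j i * v j * v i :=
        Finset.sum_comm
      calc ∑ i, (2:ℝ) * ∑ j, A i j * v i * v j
          = ∑ i, ∑ j, A i j * v i * v j + ∑ i, ∑ j, A i j * v i * v j := by
            rw [← Finset.sum_add_distrib]
            refine Finset.sum_congr rfl fun i _ => ?_
            rw [two_mul]
        _ = ∑ i, ∑ j, A i j * v i * v j + ∑ i, ∑ j, A j i * v j * v i := by rw [hswap]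
        _ = ∑ i, ∑ j, (A i j + A j i) * v i * v j := by
            rw [← Finset.sum_add_distrib]
            refine Finset.sum_congr rfl fun i _ => ?_
            rw [← Finset.sum_add_distrib]
            refine Finset.sum_congr rfl fun j _ => ?_
            ring
    have hinner : ∀ i, ∑ j, (A i j + A j i) * v i * v j
        = 2 * (A i i - 1) * (v i)^2 + 2 * v i * ∑ j, v j := by
      intro i
      rw [← Finset.sum_erase_add _ _ (Finset.mem_univ i)]
      have h1 : ∑ j ∈ Finset.univ.erase i, (A i j + A j i) * v i * v j
          = 2 * v i * ∑ j ∈ Finset.univ.erase i, v j := by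
        rw [Finset.mul_sum]
        refine Finset.sum_congr rfl fun j hj => ?_
        rw [hoff i j (Ne.symm (Finset.ne_of_mem_erase hj))]
      rw [h1, Finset.sum_erase_eq_sub (Finset.mem_univ i)]
      ring
    have htotal : (2:ℝ) * ∑ i, ∑ j, A i j * v i * v j
        = 2 * (∑ i, (A i i - 1) * (v i)^2) + 2 * (∑ i, v i)^2 := by
      rw [hsym]
      calc ∑ i, ∑ j, (A i j + A j i) * v i * v j
          = ∑ i, (2 * (A i i - 1) * (v i)^2 + 2 * v i * ∑ j, v j) :=
            Finset.sum_congr rfl fun i _ => hinner i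
        _ = 2 * (∑ i, (A i i - 1) * (v i)^2) + 2 * (∑ i, v i)^2 := by
            rw [Finset.sum_add_distrib, Finset.mul_sum]
            congr 1
            · exact Finset.sum_congr rfl fun i _ => by ring
            · rw [sq, ← Finset.sum_mul]
              ring_nf
              rw [← Finset.sum_mul]
              ring
    obtain ⟨k, hk⟩ := Function.ne_iff.mp hv
    have hpos : 0 < ∑ i, (A i i - 1) * (v i)^2 := by
      refine Finset.sum_pos' (fun i _ => ?_) ⟨k, Finset.mem_univ k, ?_⟩
      · have := hdiag i
        nlinarith [sq_nonneg (v i)]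
      · have hA := hdiag k
        simp only [Pi.zero_apply] at hk
        have hv2 : 0 < (v k)^2 := by positivity
        nlinarith
    nlinarith [sq_nonneg (∑ i, v i)]
  refine ⟨key, ?_⟩
  rw [Matrix.isUnit_iff_isUnit_det, isUnit_iff_ne_zero]
  intro hdet
  obtain ⟨v, hv, hAv⟩ := (Matrix.exists_mulVec_eq_zero_iff).mpr hdet
  have h0 : ∑ i, ∑ j, A i j * v i * v j = 0 := by
    have : ∑ i, ∑ j, A i j * v i * v j = ∑ i, v i * A.mulVec v i := by
      refine Finset.sum_congr rfl fun i _ => ?_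
      rw [Matrix.mulVec, dotProduct, Finset.mul_sum]
      exact Finset.sum_congr rfl fun j _ => by ring
    rw [this, hAv]
    simp
  exact absurd h0 (ne_of_gt (key v hv))
end

section
/- Let δ > 0, let M be a smoothed maximum function as in the context, and let N ≥ 1 be an integer. Define, for ρ = (ρ₁,…,ρ_N) ∈ ℝ^N, φ_i(ρ) = Σ_{j≠i} M(2ρ_i, 2ρ_j) + 2ρ_i and Φ(ρ) = Σ_{i=1}^N exp(φ_i(ρ)). Then Φ is a strictly convex function on ℝ^N. -/
open Finset

section helpers
variable {δ : ℝ} {M : ℝ × ℝ → ℝ} (hδ : 0 < δ)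
  (hM_convex : ConvexOn ℝ Set.univ M)
  (hM_max : ∀ u v : ℝ, δ ≤ |u - v| → M (u, v) = max u v)
  (hM_shift : ∀ u v a : ℝ, M (u + a, v + a) = M (u, v) + a)
  (hM_symm : ∀ u v : ℝ, M (u, v) = M (v, u))

include hδ hM_convex hM_max in
private lemma smax_ge_left :
    ∀ u v : ℝ, u ≤ M (u, v) := by
  intro u v
  rcases le_or_gt (u - v) δ with h | h
  · set w : ℝ := u - v with hw
    have hq : M (u + (δ - w), v - (δ - w)) = max (u + (δ - w)) (v - (δ - w)) := by
      apply hM_max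
      have h1 : u + (δ - w) - (v - (δ - w)) = 2*δ - w := by rw [hw]; ring
      rw [h1, abs_of_nonneg (by linarith)]; linarith
    have hr : M (u + (δ - w)/2, v - (δ - w)/2) = max (u + (δ - w)/2) (v - (δ - w)/2) := by
      apply hM_max
      have h1 : u + (δ - w)/2 - (v - (δ - w)/2) = δ := by rw [hw]; ring
      rw [h1, abs_of_nonneg hδ.le]
    have hmid := hM_convex.2 (Set.mem_univ ((u, v) : ℝ × ℝ))
      (Set.mem_univ ((u + (δ - w), v - (δ - w)) : ℝ × ℝ))
      (by norm_num : (0:ℝ) ≤ 1/2) (by norm_num : (0:ℝ) ≤ 1/2) (by norm_num)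
    have hpt : (1/2 : ℝ) • ((u, v) : ℝ × ℝ) + (1/2 : ℝ) • ((u + (δ - w), v - (δ - w)) : ℝ × ℝ)
        = (u + (δ - w)/2, v - (δ - w)/2) := by
      simp [Prod.ext_iff, smul_eq_mul]; constructor <;> ring
    rw [hpt, hr, hq] at hmid
    have hmaxr : max (u + (δ - w)/2) (v - (δ - w)/2) = u + (δ - w)/2 := by
      apply max_eq_left; rw [hw]; linarith
    have hmaxq : max (u + (δ - w)) (v - (δ - w)) = u + (δ - w) := by
      apply max_eq_left; rw [hw]; linarith
    rw [hmaxr, hmaxq] at hmid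
    simp only [smul_eq_mul] at hmid
    linarith
  · have := hM_max u v (by rw [abs_of_nonneg (by linarith)]; linarith)
    rw [this]; exact le_max_left _ _

include hδ hM_convex hM_max hM_symm in
private lemma smax_ge_max : ∀ u v : ℝ, max u v ≤ M (u, v) := by
  intro u v
  refine max_le (smax_ge_left hδ hM_convex hM_max u v) ?_
  rw [hM_symm]; exact smax_ge_left hδ hM_convex hM_max v u

include hδ hM_convex hM_max hM_symm in
private lemma smax_mono_left : ∀ v a b : ℝ, a ≤ b → M (a, v) ≤ M (b, v) := by
  intro v a b hab
  rcases eq_or_lt_of_le hab with rfl | hab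
  · exact le_refl _
  · set w₀ : ℝ := min a (v - δ) - (b - a) with hw₀
    have hw₀a : w₀ ≤ a - (b - a) := by
      have := min_le_left a (v - δ); rw [hw₀]; linarith
    have hMw₀ : M (w₀, v) = max w₀ v := by
      apply hM_max
      have h1 : w₀ ≤ v - δ := by have := min_le_right a (v - δ); rw [hw₀]; linarith
      rw [abs_of_nonpos (by linarith)]; linarith
    have hmaxw₀ : max w₀ v = v := by
      apply max_eq_right
      have h1 : w₀ ≤ v - δ := by have := min_le_right a (v - δ); rw [hw₀]; linarith
      linarith
    set lam : ℝ := (b - a) / (b - w₀) with hlam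
    have hbw₀ : 0 < b - w₀ := by linarith
    have hlam0 : 0 < lam := div_pos (by linarith) hbw₀
    have hlam1 : lam < 1 := by
      rw [hlam, div_lt_one hbw₀]; linarith
    have hcomb := hM_convex.2 (Set.mem_univ ((w₀, v) : ℝ × ℝ))
      (Set.mem_univ ((b, v) : ℝ × ℝ)) hlam0.le (by linarith : (0:ℝ) ≤ 1 - lam)
      (by ring)
    have hpt : lam • ((w₀, v) : ℝ × ℝ) + (1 - lam) • ((b, v) : ℝ × ℝ) = (a, v) := by
      simp [Prod.ext_iff, smul_eq_mul]
      constructor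
      · have : lam * (b - w₀) = b - a := by
          rw [hlam]; field_simp
        nlinarith [this]
      · ring
    rw [hpt, hMw₀, hmaxw₀] at hcomb
    simp only [smul_eq_mul] at hcomb
    have hvM : v ≤ M (b, v) := by
      have := smax_ge_max hδ hM_convex hM_max hM_symm b v
      exact le_trans (le_max_right b v) this
    nlinarith [hcomb, hvM, hlam0, hlam1]

include hδ hM_convex hM_max hM_symm in
private lemma smax_mono_right : ∀ u a b : ℝ, a ≤ b → M (u, a) ≤ M (u, b) := by
  intro u a b hab
  rw [hM_symm u a, hM_symm u b]
  exact smax_mono_left hδ hM_convex hM_max hM_symm u a b hab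

include hδ hM_convex hM_max hM_shift hM_symm in
private lemma smax_sandwich : ∀ u v a b : ℝ,
    M (u, v) + min a b ≤ M (u + a, v + b) ∧ M (u + a, v + b) ≤ M (u, v) + max a b := by
  intro u v a b
  rcases le_total a b with hab | hab
  · rw [min_eq_left hab, max_eq_right hab]
    constructor
    · calc M (u, v) + a = M (u + a, v + a) := (hM_shift u v a).symm
        _ ≤ M (u + a, v + b) := smax_mono_right hδ hM_convex hM_max hM_symm _ _ _ (by linarith)
    · calc M (u + a, v + b) ≤ M (u + b, v + b) :=
          smax_mono_left hδ hM_convex hM_max hM_symm _ _ _ (by linarith)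
        _ = M (u, v) + b := hM_shift u v b
  · rw [min_eq_right hab, max_eq_left hab]
    constructor
    · calc M (u, v) + b = M (u + b, v + b) := (hM_shift u v b).symm
        _ ≤ M (u + a, v + b) := smax_mono_left hδ hM_convex hM_max hM_symm _ _ _ (by linarith)
    · calc M (u + a, v + b) ≤ M (u + a, v + a) :=
          smax_mono_right hδ hM_convex hM_max hM_symm _ _ _ (by linarith)
        _ = M (u, v) + a := hM_shift u v a

end helpers


private def pphi (M : ℝ × ℝ → ℝ) (N : ℕ) (i : Fin N) (ρ : Fin N → ℝ) : ℝ :=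
  (∑ j ∈ Finset.univ.erase i, M (2 * ρ i, 2 * ρ j)) + 2 * ρ i

/-- The Kähler potential
`Φ(ρ) = Σᵢ exp(Σ_{j≠i} M(2ρᵢ, 2ρⱼ) + 2ρᵢ)` built from a smoothed maximum `M`
is strictly convex on `ℝ^N`. -/
theorem stmt_4 (δ : ℝ) (hδ : 0 < δ) (M : ℝ × ℝ → ℝ)
    (hM_smooth : ContDiff ℝ (⊤ : ℕ∞) M)
    (hM_convex : ConvexOn ℝ Set.univ M)
    (hM_max : ∀ u v : ℝ, δ ≤ |u - v| → M (u, v) = max u v)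
    (hM_shift : ∀ u v a : ℝ, M (u + a, v + a) = M (u, v) + a)
    (hM_symm : ∀ u v : ℝ, M (u, v) = M (v, u))
    (N : ℕ) (hN : 1 ≤ N) :
    StrictConvexOn ℝ Set.univ (fun ρ : Fin N → ℝ =>
      ∑ i, Real.exp ((∑ j ∈ Finset.univ.erase i, M (2 * ρ i, 2 * ρ j)) + 2 * ρ i)) := by
  classical
  haveI : Nonempty (Fin N) := ⟨⟨0, hN⟩⟩
  show StrictConvexOn ℝ Set.univ (fun ρ : Fin N → ℝ => ∑ i, Real.exp (pphi M N i ρ))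
  refine ⟨convex_univ, ?_⟩
  intro x _ y _ hxy a b ha hb hab
  set z : Fin N → ℝ := a • x + b • y with hz
  -- convexity of each pphi along this combination
  have hφconv : ∀ i, pphi M N i z ≤ a * pphi M N i x + b * pphi M N i y := by
    intro i
    have hzk : ∀ k, z k = a * x k + b * y k := by
      intro k; simp [hz, Pi.add_apply, Pi.smul_apply, smul_eq_mul]
    have hterm : ∀ j ∈ Finset.univ.erase i,
        M (2 * z i, 2 * z j) ≤ a * M (2 * x i, 2 * x j) + b * M (2 * y i, 2 * y j) := by
      intro j _
      have hcv := hM_convex.2 (Set.mem_univ ((2 * x i, 2 * x j) : ℝ × ℝ))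
        (Set.mem_univ ((2 * y i, 2 * y j) : ℝ × ℝ)) ha.le hb.le hab
      have hpt : a • ((2 * x i, 2 * x j) : ℝ × ℝ) + b • ((2 * y i, 2 * y j) : ℝ × ℝ)
          = (2 * z i, 2 * z j) := by
        simp [Prod.ext_iff, smul_eq_mul, hzk]; constructor <;> ring
      rw [hpt] at hcv
      simpa [smul_eq_mul] using hcv
    have h1 := Finset.sum_le_sum hterm
    rw [Finset.sum_add_distrib, ← Finset.mul_sum, ← Finset.mul_sum] at h1
    simp only [pphi]
    have h2 : a * ((∑ j ∈ Finset.univ.erase i, M (2 * x i, 2 * x j)) + 2 * x i)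
        + b * ((∑ j ∈ Finset.univ.erase i, M (2 * y i, 2 * y j)) + 2 * y i)
        = (a * (∑ j ∈ Finset.univ.erase i, M (2 * x i, 2 * x j))
          + b * (∑ j ∈ Finset.univ.erase i, M (2 * y i, 2 * y j))) + 2 * (a * x i + b * y i) := by
      ring
    rw [h2, ← hzk i]
    exact add_le_add_left h1 _
  by_contra hcon
  push_neg at hcon
  simp only [smul_eq_mul] at hcon
  have hle1 : ∀ i ∈ Finset.univ, Real.exp (pphi M N i z)
      ≤ Real.exp (a * pphi M N i x + b * pphi M N i y) :=
    fun i _ => Real.exp_le_exp.2 (hφconv i)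
  have hle2 : ∀ i ∈ Finset.univ, Real.exp (a * pphi M N i x + b * pphi M N i y)
      ≤ a * Real.exp (pphi M N i x) + b * Real.exp (pphi M N i y) := by
    intro i _
    have := convexOn_exp.2 (Set.mem_univ (pphi M N i x)) (Set.mem_univ (pphi M N i y))
      ha.le hb.le hab
    simpa [smul_eq_mul] using this
  have hs1 := Finset.sum_le_sum hle1
  have hs2 := Finset.sum_le_sum hle2
  have hs3 : ∑ i, (a * Real.exp (pphi M N i x) + b * Real.exp (pphi M N i y))
      = a * (∑ i, Real.exp (pphi M N i x)) + b * (∑ i, Real.exp (pphi M N i y)) := by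
    rw [Finset.sum_add_distrib, ← Finset.mul_sum, ← Finset.mul_sum]
  have heq2 : ∑ i, Real.exp (a * pphi M N i x + b * pphi M N i y)
      = ∑ i, (a * Real.exp (pphi M N i x) + b * Real.exp (pphi M N i y)) := by
    linarith [hcon, hs1, hs2, hs3.le, hs3.ge]
  have hterm2 := (Finset.sum_eq_sum_iff_of_le hle2).1 heq2
  have hfeq : ∀ i, pphi M N i x = pphi M N i y := by
    intro i
    by_contra hne
    have := strictConvexOn_exp.2 (Set.mem_univ (pphi M N i x)) (Set.mem_univ (pphi M N i y))
      hne ha hb hab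
    simp only [smul_eq_mul] at this
    exact absurd (hterm2 i (Finset.mem_univ i)) (ne_of_lt this)
  -- combinatorial contradiction
  set d : Fin N → ℝ := fun i => x i - y i with hd
  have hxd : ∀ i, 2 * x i = 2 * y i + 2 * d i := by intro i; simp [hd]; ring
  have hBl : ∀ i j, M (2 * y i, 2 * y j) + 2 * min (d i) (d j) ≤ M (2 * x i, 2 * x j) := by
    intro i j
    have := (smax_sandwich hδ hM_convex hM_max hM_shift hM_symm
      (2 * y i) (2 * y j) (2 * d i) (2 * d j)).1
    rw [← hxd i, ← hxd j] at this
    rcases le_total (d i) (d j) with h | h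
    · rw [min_eq_left h]; rw [min_eq_left (by linarith : 2 * d i ≤ 2 * d j)] at this; linarith
    · rw [min_eq_right h]; rw [min_eq_right (by linarith : 2 * d j ≤ 2 * d i)] at this; linarith
  have hBu : ∀ i j, M (2 * x i, 2 * x j) ≤ M (2 * y i, 2 * y j) + 2 * max (d i) (d j) := by
    intro i j
    have := (smax_sandwich hδ hM_convex hM_max hM_shift hM_symm
      (2 * y i) (2 * y j) (2 * d i) (2 * d j)).2
    rw [← hxd i, ← hxd j] at this
    rcases le_total (d i) (d j) with h | h
    · rw [max_eq_right h]; rw [max_eq_right (by linarith : 2 * d i ≤ 2 * d j)] at this; linarith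
    · rw [max_eq_left h]; rw [max_eq_left (by linarith : 2 * d j ≤ 2 * d i)] at this; linarith
  have heqsum : ∀ i, (∑ j ∈ Finset.univ.erase i,
      (M (2 * x i, 2 * x j) - M (2 * y i, 2 * y j))) = - (2 * d i) := by
    intro i
    have h := hfeq i
    simp only [pphi] at h
    rw [Finset.sum_sub_distrib]
    have : d i = x i - y i := by simp [hd]
    linarith [h, this]
  obtain ⟨i0, -, hi0⟩ := Finset.exists_max_image (Finset.univ : Finset (Fin N)) d
    Finset.univ_nonempty
  obtain ⟨k0, -, hk0⟩ := Finset.exists_min_image (Finset.univ : Finset (Fin N)) d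
    Finset.univ_nonempty
  set D : ℝ := ∑ i, d i with hD
  have hsumerase : ∀ i : Fin N, (∑ j ∈ Finset.univ.erase i, d j) = D - d i := by
    intro i
    rw [hD, Finset.sum_erase_eq_sub (Finset.mem_univ i)]
  have hDle : D ≤ 0 := by
    have h1 : ∑ j ∈ Finset.univ.erase i0, (2 : ℝ) * d j
        ≤ ∑ j ∈ Finset.univ.erase i0, (M (2 * x i0, 2 * x j) - M (2 * y i0, 2 * y j)) := by
      apply Finset.sum_le_sum
      intro j _
      have h2 := hBl i0 j
      rw [min_eq_right (hi0 j (Finset.mem_univ j))] at h2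
      linarith
    rw [heqsum i0, ← Finset.mul_sum, hsumerase i0] at h1
    linarith
  have hDge : 0 ≤ D := by
    have h1 : ∑ j ∈ Finset.univ.erase k0, (M (2 * x k0, 2 * x j) - M (2 * y k0, 2 * y j))
        ≤ ∑ j ∈ Finset.univ.erase k0, (2 : ℝ) * d j := by
      apply Finset.sum_le_sum
      intro j _
      have h2 := hBu k0 j
      rw [max_eq_right (hk0 j (Finset.mem_univ j))] at h2
      linarith
    rw [heqsum k0, ← Finset.mul_sum, hsumerase k0] at h1
    linarith
  have hD0 : D = 0 := le_antisymm hDle hDge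
  by_cases hc : d i0 = d k0
  · -- all coordinates of d are equal, hence all zero, hence x = y
    have hall : ∀ j, d j = d i0 := by
      intro j
      have h1 := hi0 j (Finset.mem_univ j)
      have h2 := hk0 j (Finset.mem_univ j)
      linarith [hc ▸ h2]
    have hDN : D = (N : ℝ) * d i0 := by
      rw [hD]
      rw [Finset.sum_congr rfl (fun j _ => hall j), Finset.sum_const, Finset.card_univ,
        Fintype.card_fin, nsmul_eq_mul]
    have hNe : (0 : ℝ) < N := by exact_mod_cast hN
    have hdi0 : d i0 = 0 := by
      rw [hDN] at hD0
      rcases mul_eq_zero.1 hD0 with h | h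
      · exact absurd h (ne_of_gt hNe)
      · exact h
    apply hxy
    funext j
    have := hall j
    rw [hdi0] at this
    simp only [hd] at this
    linarith
  · -- d i0 ≠ d k0 : termwise equalities at i0 and k0 contradict symmetry of M
    have hik : k0 ≠ i0 := fun h => hc (by rw [h])
    have hzi0 : ∀ j ∈ Finset.univ.erase i0,
        M (2 * x i0, 2 * x j) - M (2 * y i0, 2 * y j) - 2 * d j = 0 := by
      have hsum0 : (∑ j ∈ Finset.univ.erase i0,
          (M (2 * x i0, 2 * x j) - M (2 * y i0, 2 * y j) - 2 * d j)) = 0 := by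
        rw [Finset.sum_sub_distrib, heqsum i0, ← Finset.mul_sum, hsumerase i0, hD0]
        ring
      intro j hj
      refine (Finset.sum_eq_zero_iff_of_nonneg ?_).1 hsum0 j hj
      intro j _
      have h2 := hBl i0 j
      rw [min_eq_right (hi0 j (Finset.mem_univ j))] at h2
      linarith
    have hzk0 : ∀ j ∈ Finset.univ.erase k0,
        M (2 * x k0, 2 * x j) - M (2 * y k0, 2 * y j) - 2 * d j = 0 := by
      have hsum0 : (∑ j ∈ Finset.univ.erase k0,
          (M (2 * x k0, 2 * x j) - M (2 * y k0, 2 * y j) - 2 * d j)) = 0 := by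
        rw [Finset.sum_sub_distrib, heqsum k0, ← Finset.mul_sum, hsumerase k0, hD0]
        ring
      intro j hj
      refine (Finset.sum_eq_zero_iff_of_nonpos ?_).1 hsum0 j hj
      intro j _
      have h2 := hBu k0 j
      rw [max_eq_right (hk0 j (Finset.mem_univ j))] at h2
      linarith
    have e1 := hzi0 k0 (Finset.mem_erase.2 ⟨hik, Finset.mem_univ k0⟩)
    have e2 := hzk0 i0 (Finset.mem_erase.2 ⟨hik.symm, Finset.mem_univ i0⟩)
    rw [hM_symm (2 * x k0) (2 * x i0), hM_symm (2 * y k0) (2 * y i0)] at e2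
    apply hc
    linarith
end

section
/- Let N ≥ 2 be an integer, δ > 0, ℓ ∈ {1,…,N}, and let r₁,…,r_N be positive real numbers. If ℓ does not lie above any δ-gap for (r₁,…,r_N), then min_{1≤i≤N} r_i² > e^{−(N−1)δ} · r_ℓ² and ∏_{i=1}^N r_i² > e^{−N(N−1)δ/2} · r_ℓ^{2N}. -/
/-- If `ℓ` does not lie above any `δ`-gap for `(r₁,…,r_N)`, then
`min rᵢ² > e^{−(N−1)δ}·r_ℓ²` and `∏ rᵢ² > e^{−N(N−1)δ/2}·r_ℓ^{2N}`. -/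
theorem stmt_6 (N : ℕ) (hN : 2 ≤ N) (δ : ℝ) (hδ : 0 < δ)
    (ℓ : Fin N) (r : Fin N → ℝ) (hr : ∀ i, 0 < r i)
    (h : ∀ J : Finset (Fin N), ℓ ∈ J → Jᶜ.Nonempty →
      ¬ ∀ j ∈ J, ∀ k ∈ Jᶜ, Real.exp δ * r k ^ 2 ≤ r j ^ 2) :
    (∀ i, Real.exp (-(((N : ℝ) - 1) * δ)) * r ℓ ^ 2 < r i ^ 2) ∧
    Real.exp (-((N : ℝ) * ((N : ℝ) - 1) * δ / 2)) * r ℓ ^ (2 * N) < ∏ i, r i ^ 2 := by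
  classical
  set σ := Tuple.sort r with hσdef
  have hmono : Monotone (r ∘ σ) := Tuple.monotone_sort r
  set p : Fin N := σ⁻¹ ℓ with hpdef
  have hσp : σ p = ℓ := by simp [hpdef]
  have hsq : ∀ a b : Fin N, a ≤ b → r (σ a) ^ 2 ≤ r (σ b) ^ 2 := by
    intro a b hab
    have h1 : r (σ a) ≤ r (σ b) := hmono hab
    nlinarith [hr (σ a), hr (σ b)]
  have step : ∀ m : ℕ, ∀ hm : m + 1 < N, m + 1 ≤ (p : ℕ) →
      r (σ ⟨m+1, hm⟩) ^ 2 < Real.exp δ * r (σ ⟨m, Nat.lt_of_succ_lt hm⟩) ^ 2 := by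
    intro m hm hmp
    by_contra hcon
    push_neg at hcon
    refine h (Finset.univ.filter (fun j => m + 1 ≤ ((σ⁻¹ j : Fin N) : ℕ))) ?_ ?_ ?_
    · simp only [Finset.mem_filter, Finset.mem_univ, true_and]
      exact hmp
    · refine ⟨σ ⟨m, Nat.lt_of_succ_lt hm⟩, ?_⟩
      simp only [Finset.mem_compl, Finset.mem_filter, Finset.mem_univ, true_and,
        Equiv.Perm.inv_def, Equiv.symm_apply_apply]
      omega
    · intro j hj k hk
      simp only [Finset.mem_filter, Finset.mem_univ, true_and] at hj
      simp only [Finset.mem_compl, Finset.mem_filter, Finset.mem_univ, true_and,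
        not_le] at hk
      have hj2 : r (σ ⟨m+1, hm⟩) ^ 2 ≤ r j ^ 2 := by
        have := hsq ⟨m+1, hm⟩ (σ⁻¹ j) (by rw [Fin.le_def]; show m + 1 ≤ _; omega)
        simpa using this
      have hk2 : r k ^ 2 ≤ r (σ ⟨m, Nat.lt_of_succ_lt hm⟩) ^ 2 := by
        have := hsq (σ⁻¹ k) ⟨m, Nat.lt_of_succ_lt hm⟩ (by rw [Fin.le_def]; show _ ≤ m; omega)
        simpa using this
      have := Real.exp_pos δ
      nlinarith
  -- chain: strict bound below p
  have chain : ∀ d : ℕ, ∀ m : ℕ, ∀ hm : m < N, m + d = (p : ℕ) → 1 ≤ d →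
      Real.exp (-((d : ℝ) * δ)) * r ℓ ^ 2 < r (σ ⟨m, hm⟩) ^ 2 := by
    intro d
    induction d with
    | zero => omega
    | succ d ih =>
      intro m hm hmp _
      have hm1 : m + 1 < N := by
        have := p.isLt; omega
      have hstep := step m hm1 (by omega)
      rcases Nat.eq_zero_or_pos d with hd0 | hd1
      · subst hd0
        have : (⟨m+1, hm1⟩ : Fin N) = p := by
          apply Fin.ext; simp; omega
        rw [this, hσp] at hstep
        have he := Real.exp_pos δ
        have : Real.exp (-((1:ℝ) * δ)) * Real.exp δ = 1 := by
          rw [← Real.exp_add]; ring_nf; exact Real.exp_zero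
        push_cast
        nlinarith [sq_nonneg (r ℓ), Real.exp_pos (-((1:ℝ)*δ))]
      · have hih := ih (m+1) hm1 (by omega) hd1
        have he := Real.exp_pos δ
        have key : Real.exp (-(((d:ℝ)+1) * δ)) * Real.exp δ = Real.exp (-((d:ℝ) * δ)) := by
          rw [← Real.exp_add]; ring_nf
        push_cast
        calc Real.exp (-(((d:ℝ)+1) * δ)) * r ℓ ^ 2
            = (Real.exp (-((d:ℝ) * δ)) * r ℓ ^ 2) / Real.exp δ := by
              rw [← key]; field_simp
          _ < r (σ ⟨m+1, hm1⟩) ^ 2 / Real.exp δ := by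
              exact (div_lt_div_iff_of_pos_right he).mpr hih
          _ ≤ r (σ ⟨m, hm⟩) ^ 2 := by
              rw [div_le_iff₀ he]; linarith [hstep]
  have cle : ∀ m : Fin N,
      Real.exp (-((((p:ℕ) - (m:ℕ) : ℕ) : ℝ) * δ)) * r ℓ ^ 2 ≤ r (σ m) ^ 2 := by
    intro m
    rcases le_or_gt (p:ℕ) (m:ℕ) with hpm | hpm
    · have h0 : (p:ℕ) - (m:ℕ) = 0 := by omega
      rw [h0]
      simp only [Nat.cast_zero, zero_mul, neg_zero, Real.exp_zero, one_mul]
      have := hsq p m (by rwa [Fin.le_def])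
      rwa [hσp] at this
    · have := chain ((p:ℕ) - (m:ℕ)) (m:ℕ) m.isLt (by omega) (by omega)
      simpa using this.le
  have hrl2 : (0:ℝ) < r ℓ ^ 2 := pow_pos (hr ℓ) 2
  have hNR : (2:ℝ) ≤ (N:ℝ) := by exact_mod_cast hN
  constructor
  · intro i
    set q := σ⁻¹ i with hq
    have hσq : σ q = i := by simp [hq]
    rcases le_or_gt (p:ℕ) (q:ℕ) with hpq | hpq
    · have h1 : r ℓ ^ 2 ≤ r i ^ 2 := by
        have := hsq p q (by rwa [Fin.le_def]); rwa [hσp, hσq] at this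
      have h2 : Real.exp (-(((N:ℝ) - 1) * δ)) < 1 := by
        rw [Real.exp_lt_one_iff]; nlinarith
      nlinarith
    · have hd : 1 ≤ (p:ℕ) - (q:ℕ) := by omega
      have hc := chain ((p:ℕ) - (q:ℕ)) (q:ℕ) q.isLt (by omega) hd
      rw [show (⟨(q:ℕ), q.isLt⟩ : Fin N) = q from Fin.ext rfl, hσq] at hc
      refine lt_of_le_of_lt ?_ hc
      apply mul_le_mul_of_nonneg_right _ hrl2.le
      apply Real.exp_le_exp.mpr
      have h1 : ((p:ℕ) - (q:ℕ)) + 1 ≤ N := by have := p.isLt; omega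
      have h2 : ((((p:ℕ) - (q:ℕ)) + 1 : ℕ) : ℝ) ≤ (N:ℝ) := by exact_mod_cast h1
      push_cast at h2
      nlinarith
  · have hprod_eq : ∏ m : Fin N, r (σ m) ^ 2 = ∏ i, r i ^ 2 :=
      Equiv.prod_comp σ (fun i => r i ^ 2)
    have h3 : r ℓ ^ (2*N) = (r ℓ ^ 2) ^ N := by rw [pow_mul]
    rcases Nat.eq_zero_or_pos (p:ℕ) with hp0 | hp1
    · have hle : ∀ m : Fin N, r ℓ ^ 2 ≤ r (σ m) ^ 2 := by
        intro m
        have := hsq p m (by rw [Fin.le_def]; omega)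
        rwa [hσp] at this
      have h1 : (r ℓ ^ 2) ^ N ≤ ∏ i, r i ^ 2 := by
        rw [← hprod_eq]
        calc (r ℓ ^ 2) ^ N = ∏ _m : Fin N, r ℓ ^ 2 := by
              simp [Finset.prod_const, Finset.card_univ]
          _ ≤ _ := Finset.prod_le_prod (fun _ _ => hrl2.le) (fun m _ => hle m)
      have h2 : Real.exp (-((N:ℝ) * ((N:ℝ) - 1) * δ / 2)) < 1 := by
        rw [Real.exp_lt_one_iff]
        nlinarith [mul_pos (mul_pos (show (0:ℝ) < (N:ℝ) by linarith)
          (show (0:ℝ) < (N:ℝ) - 1 by linarith)) hδ]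
      rw [h3]
      nlinarith [pow_pos hrl2 N]
    · have hN0 : 0 < N := by omega
      set c : Fin N → ℕ := fun m => (p:ℕ) - (m:ℕ) with hc
      have key : ∏ m : Fin N, (Real.exp (-((c m : ℝ) * δ)) * r ℓ ^ 2)
          < ∏ m : Fin N, r (σ m) ^ 2 := by
        apply Finset.prod_lt_prod (fun m _ => by positivity) (fun m _ => cle m)
        refine ⟨⟨0, hN0⟩, Finset.mem_univ _, ?_⟩
        have := chain (p:ℕ) 0 hN0 (by omega) hp1
        simpa [hc] using this
      have lhs_eq : ∏ m : Fin N, (Real.exp (-((c m : ℝ) * δ)) * r ℓ ^ 2)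
          = Real.exp (-(((∑ m : Fin N, c m : ℕ) : ℝ) * δ)) * (r ℓ ^ 2) ^ N := by
        rw [Finset.prod_mul_distrib, ← Real.exp_sum]
        congr 1
        · congr 1
          push_cast
          simp only [← neg_mul]
          rw [← Finset.sum_mul]
          congr 1
          rw [← Finset.sum_neg_distrib]
        · simp [Finset.prod_const, Finset.card_univ]
      have hsum : 2 * (∑ m : Fin N, c m) ≤ N * (N - 1) := by
        have hb : ∀ m : Fin N, c m ≤ N - 1 - (m:ℕ) := by
          intro m
          have := p.isLt
          simp only [hc]
          omega
        have h1 : (∑ m : Fin N, c m) ≤ ∑ m : Fin N, (N - 1 - (m:ℕ)) :=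
          Finset.sum_le_sum (fun m _ => hb m)
        have h2 : ∑ m : Fin N, (N - 1 - (m:ℕ)) = ∑ j ∈ Finset.range N, (N - 1 - j) :=
          Fin.sum_univ_eq_sum_range _ _
        have h3 : ∑ j ∈ Finset.range N, (N - 1 - j) = ∑ j ∈ Finset.range N, j := by
          rw [← Finset.sum_range_reflect]
          apply Finset.sum_congr rfl
          intro j hj
          simp only [Finset.mem_range] at hj
          omega
        have h4 := Finset.sum_range_id_mul_two N
        omega
      have hsumR : (((∑ m : Fin N, c m : ℕ)) : ℝ) ≤ (N:ℝ) * ((N:ℝ) - 1) / 2 := by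
        have : ((2 * (∑ m : Fin N, c m) : ℕ) : ℝ) ≤ ((N * (N - 1) : ℕ) : ℝ) :=
          Nat.cast_le.mpr hsum
        have h1N : (1:ℕ) ≤ N := by omega
        push_cast [Nat.cast_sub h1N] at this ⊢
        linarith
      have hexp : Real.exp (-((N:ℝ) * ((N:ℝ) - 1) * δ / 2))
          ≤ Real.exp (-(((∑ m : Fin N, c m : ℕ) : ℝ) * δ)) := by
        apply Real.exp_le_exp.mpr
        nlinarith
      rw [h3]
      calc Real.exp (-((N:ℝ) * ((N:ℝ) - 1) * δ / 2)) * (r ℓ ^ 2) ^ N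
          ≤ Real.exp (-(((∑ m : Fin N, c m : ℕ) : ℝ) * δ)) * (r ℓ ^ 2) ^ N := by
            apply mul_le_mul_of_nonneg_right hexp (pow_pos hrl2 N).le
        _ < ∏ i, r i ^ 2 := by rw [← lhs_eq, ← hprod_eq] at *; exact key
end

section
/- Let δ > 0, let M be a smoothed maximum function as in the context, let N ≥ 2, and let Φ, φ_i and μ_j be as in the context. Suppose ρ ∈ ℝ^N satisfies ρ₁ ≤ ρ₂ ≤ ⋯ ≤ ρ_N. Then: (1) 0 < μ₁(ρ) ≤ μ₂(ρ) ≤ ⋯ ≤ μ_N(ρ); and (2) for every 1 ≤ j ≤ N, 2 ≤ μ_j(ρ) / (e^{2jρ_j} · ∏_{i=j+1}^N e^{2ρ_i}) ≤ 4N e^{2Nδ}. -/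
private theorem stmt7_m_facts (δ : ℝ) (hδ : 0 < δ) (m : ℝ → ℝ)
    (hdiff : Differentiable ℝ m) (hconv : ConvexOn ℝ Set.univ m)
    (hleft : ∀ t ≤ -δ, m t = 0) (hright : ∀ t, δ ≤ t → m t = t)
    (hrefl : ∀ t, m t = t + m (-t)) :
    Monotone (deriv m) ∧ (∀ t, t < -δ → deriv m t = 0) ∧
    (∀ t, 0 ≤ deriv m t) ∧ (∀ t, deriv m t ≤ 1) ∧
    (∀ t, deriv m t + deriv m (-t) = 1) ∧ Monotone m ∧
    (∀ t, max t 0 ≤ m t) ∧ (∀ t, m t ≤ max t 0 + δ) ∧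
    (∀ t, δ < t → deriv m t = 1) := by
  have hmono : Monotone (deriv m) := by
    have := hconv.monotoneOn_deriv (fun x _ => hdiff x)
    rwa [monotoneOn_univ] at this
  have d0 : ∀ t < -δ, deriv m t = 0 := by
    intro t ht
    have he : m =ᶠ[nhds t] fun _ => (0:ℝ) := by
      filter_upwards [Iio_mem_nhds ht] with s hs using hleft s (le_of_lt hs)
    rw [he.deriv_eq]; exact deriv_const _ _
  have d1 : ∀ t, δ < t → deriv m t = 1 := by
    intro t ht
    have he : m =ᶠ[nhds t] fun s => s := by
      filter_upwards [Ioi_mem_nhds ht] with s hs using hright s hs.le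
    rw [he.deriv_eq]; simp
  have dnn : ∀ t, 0 ≤ deriv m t := by
    intro t
    have h1 : deriv m (min t (-δ - 1)) = 0 :=
      d0 _ (lt_of_le_of_lt (min_le_right _ _) (by linarith))
    rw [← h1]; exact hmono (min_le_left _ _)
  have dle : ∀ t, deriv m t ≤ 1 := by
    intro t
    have h1 : deriv m (max t (δ + 1)) = 1 :=
      d1 _ (lt_of_lt_of_le (by linarith) (le_max_right _ _))
    rw [← h1]; exact hmono (le_max_left _ _)
  have drefl : ∀ t, deriv m t + deriv m (-t) = 1 := by
    intro t
    have h1 : HasDerivAt m (deriv m t) t := (hdiff t).hasDerivAt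
    have h3 : HasDerivAt (fun s : ℝ => m (-s)) (-(deriv m (-t))) t := by
      have := ((hdiff (-t)).hasDerivAt).comp t (hasDerivAt_neg t)
      rw [mul_neg_one] at this; exact this
    have h2 : HasDerivAt (fun s : ℝ => s + m (-s)) (1 + -(deriv m (-t))) t :=
      (hasDerivAt_id t).add h3
    have h2' : HasDerivAt m (1 + -(deriv m (-t))) t :=
      h2.congr_of_eventuallyEq (Filter.Eventually.of_forall fun s => hrefl s)
    have := h1.unique h2'
    linarith
  have mmono : Monotone m := monotone_of_deriv_nonneg hdiff dnn
  have mge : ∀ t, max t 0 ≤ m t := by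
    intro t
    have h0 : (0:ℝ) ≤ m t := by
      have h1 : m (min t (-δ)) = 0 := hleft _ (min_le_right _ _)
      rw [← h1]; exact mmono (min_le_left _ _)
    have h2 : t ≤ m t := by
      have h3 := hrefl t
      have h4 : (0:ℝ) ≤ m (-t) := by
        have h1 : m (min (-t) (-δ)) = 0 := hleft _ (min_le_right _ _)
        rw [← h1]; exact mmono (min_le_left _ _)
      linarith
    exact max_le h2 h0
  have mle : ∀ t, m t ≤ max t 0 + δ := by
    intro t
    rcases le_or_gt δ t with h | h
    · rw [hright t h]; have := le_max_left t 0; linarith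
    · have h1 : m t ≤ m δ := mmono h.le
      rw [hright δ le_rfl] at h1
      have := le_max_right t 0; linarith
  exact ⟨hmono, d0, dnn, dle, drefl, mmono, mge, mle, d1⟩


set_option maxHeartbeats 1000000 in
/-- For the potential `Φ(ρ) = Σᵢ exp(Σ_{j≠i} M(2ρᵢ,2ρⱼ) + 2ρᵢ)`
and its partial derivatives (moment map coordinates) `μⱼ(ρ) = ∂Φ/∂ρⱼ(ρ)`,
if `ρ₁ ≤ … ≤ ρ_N`, then `0 < μ₁ ≤ … ≤ μ_N` and for each `j`, the ratio
`μⱼ / (e^{2jρⱼ}·∏_{i>j} e^{2ρᵢ})` lies in `[2, 4N e^{2Nδ}]`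
(indices `j : Fin N` are zero-based, so `j` corresponds to `j+1` above). -/
theorem stmt_7 (δ : ℝ) (hδ : 0 < δ) (M : ℝ × ℝ → ℝ)
    (hM_smooth : ContDiff ℝ (⊤ : ℕ∞) M)
    (hM_convex : ConvexOn ℝ Set.univ M)
    (hM_max : ∀ u v : ℝ, δ ≤ |u - v| → M (u, v) = max u v)
    (hM_shift : ∀ u v a : ℝ, M (u + a, v + a) = M (u, v) + a)
    (hM_symm : ∀ u v : ℝ, M (u, v) = M (v, u))
    (N : ℕ) (hN : 2 ≤ N)
    (Φ : (Fin N → ℝ) → ℝ)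
    (hΦ : ∀ ρ : Fin N → ℝ,
      Φ ρ = ∑ i, Real.exp ((∑ j ∈ Finset.univ.erase i, M (2 * ρ i, 2 * ρ j)) + 2 * ρ i))
    (μ : (Fin N → ℝ) → Fin N → ℝ)
    (hμ : ∀ (ρ : Fin N → ℝ) (j : Fin N), μ ρ j = fderiv ℝ Φ ρ (Pi.single j 1))
    (ρ : Fin N → ℝ) (hρ : Monotone ρ) :
    ((∀ j, 0 < μ ρ j) ∧ (∀ i j : Fin N, i ≤ j → μ ρ i ≤ μ ρ j)) ∧
    (∀ j : Fin N,
      2 ≤ μ ρ j /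
          (Real.exp (2 * (((j : ℕ) : ℝ) + 1) * ρ j) * ∏ i ∈ Finset.Ioi j, Real.exp (2 * ρ i)) ∧
      μ ρ j /
          (Real.exp (2 * (((j : ℕ) : ℝ) + 1) * ρ j) * ∏ i ∈ Finset.Ioi j, Real.exp (2 * ρ i)) ≤
        4 * (N : ℝ) * Real.exp (2 * (N : ℝ) * δ)) := by
  classical
  have hN2 : (2:ℝ) ≤ (N:ℝ) := by exact_mod_cast hN
  set m : ℝ → ℝ := fun t => M (t, 0) with hm_def
  have M_eq : ∀ u v : ℝ, M (u, v) = v + m (u - v) := by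
    intro u v
    have h := hM_shift (u - v) 0 v
    rw [show u - v + v = u by ring, zero_add] at h
    rw [h, hm_def, add_comm]
  have hm_diff : Differentiable ℝ m :=
    (hM_smooth.comp (contDiff_id.prodMk contDiff_const)).differentiable (by simp)
  have hconv_m : ConvexOn ℝ Set.univ m := by
    refine ⟨convex_univ, fun x _ y _ a b ha hb hab => ?_⟩
    have h := hM_convex.2 (Set.mem_univ ((x:ℝ), (0:ℝ))) (Set.mem_univ ((y:ℝ), (0:ℝ))) ha hb hab
    have h2 : a • ((x:ℝ), (0:ℝ)) + b • ((y:ℝ), (0:ℝ)) = ((a*x + b*y : ℝ), (0:ℝ)) := by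
      simp [Prod.ext_iff]
    rw [h2] at h
    simpa [hm_def, smul_eq_mul] using h
  have hleft : ∀ t ≤ -δ, m t = 0 := by
    intro t ht
    show M (t, 0) = 0
    rw [hM_max t 0 (by rw [sub_zero, abs_of_nonpos (by linarith)]; linarith)]
    exact max_eq_right (by linarith)
  have hright : ∀ t, δ ≤ t → m t = t := by
    intro t ht
    show M (t, 0) = t
    rw [hM_max t 0 (by rw [sub_zero, abs_of_nonneg (by linarith)]; linarith)]
    exact max_eq_left (by linarith)
  have hrefl : ∀ t, m t = t + m (-t) := by
    intro t
    have h1 : m t = M (0, t) := hM_symm t 0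
    have h2 := M_eq 0 t
    rw [zero_sub] at h2
    rw [h1, h2]
  obtain ⟨hm'_mono, hd0, hd_nn, hd_le, hd_refl, hm_mono, hm_ge, hm_le, hd1⟩ :=
    stmt7_m_facts δ hδ m hm_diff hconv_m hleft hright hrefl
  have hMax_le : ∀ u v : ℝ, max u v ≤ v + m (u - v) := by
    intro u v
    have h1 := hm_ge (u - v)
    have h2 := le_max_left (u - v) 0
    have h3 := le_max_right (u - v) 0
    exact max_le (by linarith) (by linarith)
  have hle_Max : ∀ u v : ℝ, v + m (u - v) ≤ max u v + δ := by
    intro u v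
    have h := hm_le (u - v)
    have hmax : max (u - v) 0 + v = max u v := by
      rcases le_total u v with h' | h'
      · rw [max_eq_right h', max_eq_right (by linarith : u - v ≤ (0:ℝ))]; ring
      · rw [max_eq_left h', max_eq_left (by linarith : (0:ℝ) ≤ u - v)]; ring
    linarith
  -- the value of the exponents
  set φ : Fin N → ℝ :=
    fun i => (∑ k ∈ Finset.univ.erase i, (2 * ρ k + m (2 * ρ i - 2 * ρ k))) + 2 * ρ i
    with hφ_def
  have hΦ' : Φ = fun x : Fin N → ℝ =>
      ∑ i, Real.exp ((∑ k ∈ Finset.univ.erase i, (2 * x k + m (2 * x i - 2 * x k))) + 2 * x i) := by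
    funext x
    rw [hΦ x]
    exact Finset.sum_congr rfl fun i _ => by
      rw [Finset.sum_congr rfl fun k _ => M_eq (2 * x i) (2 * x k)]
  set pr : Fin N → ((Fin N → ℝ) →L[ℝ] ℝ) := fun k => ContinuousLinearMap.proj k with hpr_def
  have hproj : ∀ k : Fin N, HasFDerivAt (fun x : Fin N → ℝ => x k) (pr k) ρ :=
    fun k => (pr k).hasFDerivAt
  have hInner : ∀ i : Fin N, HasFDerivAt
      (fun x : Fin N → ℝ =>
        (∑ k ∈ Finset.univ.erase i, (2 * x k + m (2 * x i - 2 * x k))) + 2 * x i)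
      ((∑ k ∈ Finset.univ.erase i,
          ((2:ℝ) • pr k + deriv m (2 * ρ i - 2 * ρ k) • ((2:ℝ) • pr i - (2:ℝ) • pr k)))
        + (2:ℝ) • pr i) ρ := by
    intro i
    refine HasFDerivAt.add (HasFDerivAt.fun_sum fun k _ => ?_) ((hproj i).const_mul 2)
    refine HasFDerivAt.add ((hproj k).const_mul 2) ?_
    have hlin : HasFDerivAt (fun x : Fin N → ℝ => 2 * x i - 2 * x k)
        ((2:ℝ) • pr i - (2:ℝ) • pr k) ρ := ((hproj i).const_mul 2).sub ((hproj k).const_mul 2)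
    exact (hm_diff (2 * ρ i - 2 * ρ k)).hasDerivAt.comp_hasFDerivAt ρ hlin
  have hD : HasFDerivAt Φ
      (∑ i, Real.exp (φ i) •
        ((∑ k ∈ Finset.univ.erase i,
            ((2:ℝ) • pr k + deriv m (2 * ρ i - 2 * ρ k) • ((2:ℝ) • pr i - (2:ℝ) • pr k)))
          + (2:ℝ) • pr i)) ρ := by
    rw [hΦ']
    exact HasFDerivAt.fun_sum fun i _ => (hInner i).exp
  have hform : ∀ j : Fin N, μ ρ j =
      2 * Real.exp (φ j) * (1 + ∑ k ∈ Finset.univ.erase j, deriv m (2 * ρ j - 2 * ρ k))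
      + ∑ i ∈ Finset.univ.erase j, 2 * Real.exp (φ i) * (1 - deriv m (2 * ρ i - 2 * ρ j)) := by
    intro j
    rw [hμ, hD.fderiv]
    simp only [ContinuousLinearMap.coe_sum', Finset.sum_apply, ContinuousLinearMap.coe_smul',
      Pi.smul_apply, ContinuousLinearMap.add_apply, ContinuousLinearMap.coe_sub',
      Pi.sub_apply, hpr_def, ContinuousLinearMap.proj_apply, Pi.single_apply, smul_eq_mul]
    rw [← Finset.add_sum_erase _ _ (Finset.mem_univ j)]
    congr 1
    · have h1 : (∑ k ∈ Finset.univ.erase j,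
          ((2 * if k = j then (1:ℝ) else 0) + deriv m (2 * ρ j - 2 * ρ k) *
            ((2 * if j = j then (1:ℝ) else 0) - 2 * if k = j then (1:ℝ) else 0)))
          = ∑ k ∈ Finset.univ.erase j, 2 * deriv m (2 * ρ j - 2 * ρ k) := by
        refine Finset.sum_congr rfl fun k hk => ?_
        rw [if_neg (Finset.ne_of_mem_erase hk), if_pos rfl]; ring
      rw [h1, if_pos rfl, ← Finset.mul_sum]
      ring
    · refine Finset.sum_congr rfl fun i hi => ?_
      have hij : i ≠ j := Finset.ne_of_mem_erase hi
      have h2 : (∑ k ∈ Finset.univ.erase i,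
          ((2 * if k = j then (1:ℝ) else 0) + deriv m (2 * ρ i - 2 * ρ k) *
            (2 * 0 - 2 * if k = j then (1:ℝ) else 0)))
          = ∑ k ∈ Finset.univ.erase i,
              (if k = j then (2 - 2 * deriv m (2 * ρ i - 2 * ρ k)) else 0) := by
        refine Finset.sum_congr rfl fun k hk => ?_
        by_cases hkj : k = j
        · rw [if_pos hkj, if_pos hkj]; ring
        · rw [if_neg hkj, if_neg hkj]; ring
      rw [if_neg hij, h2, Finset.sum_ite_eq' (Finset.univ.erase i) j,
        if_pos (Finset.mem_erase.mpr ⟨Ne.symm hij, Finset.mem_univ j⟩)]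
      ring
  -- monotonicity of φ
  have hφ_mono : ∀ a b : Fin N, a ≤ b → φ a ≤ φ b := by
    intro a b hab
    rcases eq_or_lt_of_le hab with h | h
    · rw [h]
    have hne : a ≠ b := ne_of_lt h
    have hmemb : b ∈ Finset.univ.erase a := Finset.mem_erase.mpr ⟨Ne.symm hne, Finset.mem_univ b⟩
    have hmema : a ∈ Finset.univ.erase b := Finset.mem_erase.mpr ⟨hne, Finset.mem_univ a⟩
    have hsplit_a := (Finset.add_sum_erase (Finset.univ.erase a)
      (fun k => 2 * ρ k + m (2 * ρ a - 2 * ρ k)) hmemb).symm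
    have hsplit_b := (Finset.add_sum_erase (Finset.univ.erase b)
      (fun k => 2 * ρ k + m (2 * ρ b - 2 * ρ k)) hmema).symm
    have hS : (Finset.univ.erase a).erase b = (Finset.univ.erase b).erase a :=
      Finset.erase_right_comm
    have hsum : ∑ k ∈ (Finset.univ.erase b).erase a, (2 * ρ k + m (2 * ρ a - 2 * ρ k))
        ≤ ∑ k ∈ (Finset.univ.erase b).erase a, (2 * ρ k + m (2 * ρ b - 2 * ρ k)) := by
      refine Finset.sum_le_sum fun k _ => ?_
      have := hm_mono (show 2 * ρ a - 2 * ρ k ≤ 2 * ρ b - 2 * ρ k by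
        have := hρ hab; linarith)
      linarith
    have hcross : m (2 * ρ a - 2 * ρ b) ≤ m (2 * ρ b - 2 * ρ a) := by
      refine hm_mono ?_
      have := hρ hab; linarith
    have hρab := hρ hab
    simp only [hφ_def]
    rw [hsplit_a, hsplit_b, hS]
    linarith
  -- the uniform lower bound function L
  set L : Fin N → ℝ := fun j => ∑ k, max (2 * ρ j) (2 * ρ k) with hL_def
  have hL_phi : ∀ j : Fin N, L j = max (2 * ρ j) (2 * ρ j)
      + ∑ k ∈ Finset.univ.erase j, max (2 * ρ j) (2 * ρ k) := by
    intro j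
    simp only [hL_def]
    exact (Finset.add_sum_erase _ (fun k => max (2 * ρ j) (2 * ρ k)) (Finset.mem_univ j)).symm
  have hφ_geL : ∀ j : Fin N, L j ≤ φ j := by
    intro j
    rw [hL_phi j, max_self]
    have h1 : ∑ k ∈ Finset.univ.erase j, max (2 * ρ j) (2 * ρ k)
        ≤ ∑ k ∈ Finset.univ.erase j, (2 * ρ k + m (2 * ρ j - 2 * ρ k)) :=
      Finset.sum_le_sum fun k _ => hMax_le (2 * ρ j) (2 * ρ k)
    simp only [hφ_def]
    linarith
  have hcard_erase : ∀ i : Fin N, (Finset.univ.erase i).card = N - 1 := by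
    intro i
    rw [Finset.card_erase_of_mem (Finset.mem_univ i), Finset.card_univ, Fintype.card_fin]
  have hφ_leL : ∀ i : Fin N, φ i ≤ L i + ((N:ℝ) - 1) * δ := by
    intro i
    have h1 : ∑ k ∈ Finset.univ.erase i, (2 * ρ k + m (2 * ρ i - 2 * ρ k))
        ≤ ∑ k ∈ Finset.univ.erase i, (max (2 * ρ i) (2 * ρ k) + δ) :=
      Finset.sum_le_sum fun k _ => hle_Max (2 * ρ i) (2 * ρ k)
    have h2 : ∑ k ∈ Finset.univ.erase i, (max (2 * ρ i) (2 * ρ k) + δ)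
        = (∑ k ∈ Finset.univ.erase i, max (2 * ρ i) (2 * ρ k)) + ((N:ℝ) - 1) * δ := by
      rw [Finset.sum_add_distrib, Finset.sum_const, hcard_erase i, nsmul_eq_mul,
        Nat.cast_sub (by omega : 1 ≤ N), Nat.cast_one]
    rw [hL_phi i, max_self]
    simp only [hφ_def]
    linarith
  have hL_mono : ∀ a b : Fin N, a ≤ b → L a ≤ L b := by
    intro a b hab
    simp only [hL_def]
    refine Finset.sum_le_sum fun k _ => ?_
    have := hρ hab
    exact max_le_max (by linarith) le_rfl
  have hL_close : ∀ i j : Fin N, 2 * ρ i ≤ 2 * ρ j + δ → L i ≤ L j + (N:ℝ) * δ := by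
    intro i j hij
    have h1 : ∑ k, max (2 * ρ i) (2 * ρ k) ≤ ∑ k : Fin N, (max (2 * ρ j) (2 * ρ k) + δ) := by
      refine Finset.sum_le_sum fun k _ => ?_
      have h2 := le_max_left (2 * ρ j) (2 * ρ k)
      have h3 := le_max_right (2 * ρ j) (2 * ρ k)
      exact max_le (by linarith) (by linarith)
    have h2 : ∑ k : Fin N, (max (2 * ρ j) (2 * ρ k) + δ)
        = (∑ k, max (2 * ρ j) (2 * ρ k)) + (N:ℝ) * δ := by
      rw [Finset.sum_add_distrib, Finset.sum_const, Finset.card_univ, Fintype.card_fin,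
        nsmul_eq_mul]
    simp only [hL_def]
    linarith
  have hL_eq : ∀ j : Fin N,
      L j = 2 * (((j : ℕ) : ℝ) + 1) * ρ j + ∑ k ∈ Finset.Ioi j, 2 * ρ k := by
    intro j
    have huniv : Finset.Iic j ∪ Finset.Ioi j = Finset.univ := by
      ext k; simp [le_or_gt]
    have hdisj : Disjoint (Finset.Iic j) (Finset.Ioi j) := by
      rw [Finset.disjoint_left]
      intro k hk hk'
      rw [Finset.mem_Iic] at hk
      rw [Finset.mem_Ioi] at hk'
      exact absurd hk (not_le.mpr hk')
    have h1 : ∑ k ∈ Finset.Iic j, max (2 * ρ j) (2 * ρ k) = ∑ _k ∈ Finset.Iic j, 2 * ρ j :=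
      Finset.sum_congr rfl fun k hk =>
        max_eq_left (by have := hρ (Finset.mem_Iic.mp hk); linarith)
    have h2 : ∑ k ∈ Finset.Ioi j, max (2 * ρ j) (2 * ρ k) = ∑ k ∈ Finset.Ioi j, 2 * ρ k :=
      Finset.sum_congr rfl fun k hk =>
        max_eq_right (by have := hρ (le_of_lt (Finset.mem_Ioi.mp hk)); linarith)
    simp only [hL_def]
    rw [← huniv, Finset.sum_union hdisj, h1, h2, Finset.sum_const, Fin.card_Iic, nsmul_eq_mul]
    push_cast
    ring
  have hdenom : ∀ j : Fin N,
      Real.exp (2 * (((j : ℕ) : ℝ) + 1) * ρ j) * ∏ i ∈ Finset.Ioi j, Real.exp (2 * ρ i)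
        = Real.exp (L j) := by
    intro j
    rw [← Real.exp_sum, ← Real.exp_add, hL_eq j]
  -- part 1: positivity
  have hsum_nn : ∀ j : Fin N, 0 ≤ ∑ k ∈ Finset.univ.erase j, deriv m (2 * ρ j - 2 * ρ k) :=
    fun j => Finset.sum_nonneg fun k _ => hd_nn _
  have hoff_nn : ∀ j : Fin N,
      0 ≤ ∑ i ∈ Finset.univ.erase j, 2 * Real.exp (φ i) * (1 - deriv m (2 * ρ i - 2 * ρ j)) := by
    intro j
    refine Finset.sum_nonneg fun i _ => ?_
    have h1 := hd_le (2 * ρ i - 2 * ρ j)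
    have h2 := (Real.exp_pos (φ i)).le
    nlinarith
  have hlow : ∀ j : Fin N, 2 * Real.exp (φ j) ≤ μ ρ j := by
    intro j
    rw [hform j]
    have h1 := hsum_nn j
    have h2 := hoff_nn j
    nlinarith [Real.exp_pos (φ j)]
  have hpos : ∀ j, 0 < μ ρ j := fun j =>
    lt_of_lt_of_le (by positivity) (hlow j)
  -- part 1: monotonicity
  have hmono : ∀ a b : Fin N, a ≤ b → μ ρ a ≤ μ ρ b := by
    intro a b hab
    rcases eq_or_lt_of_le hab with h | h
    · rw [h]
    have hne : a ≠ b := ne_of_lt h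
    have hmemb : b ∈ Finset.univ.erase a := Finset.mem_erase.mpr ⟨Ne.symm hne, Finset.mem_univ b⟩
    have hmema : a ∈ Finset.univ.erase b := Finset.mem_erase.mpr ⟨hne, Finset.mem_univ a⟩
    rw [hform a, hform b]
    rw [(Finset.add_sum_erase (Finset.univ.erase a)
      (fun k => deriv m (2 * ρ a - 2 * ρ k)) hmemb).symm]
    rw [(Finset.add_sum_erase (Finset.univ.erase b)
      (fun k => deriv m (2 * ρ b - 2 * ρ k)) hmema).symm]
    rw [(Finset.add_sum_erase (Finset.univ.erase a)
      (fun i => 2 * Real.exp (φ i) * (1 - deriv m (2 * ρ i - 2 * ρ a))) hmemb).symm]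
    rw [(Finset.add_sum_erase (Finset.univ.erase b)
      (fun i => 2 * Real.exp (φ i) * (1 - deriv m (2 * ρ i - 2 * ρ b))) hmema).symm]
    rw [show (Finset.univ.erase a).erase b = (Finset.univ.erase b).erase a from
      Finset.erase_right_comm]
    have hρab := hρ hab
    have hAB : ∑ k ∈ (Finset.univ.erase b).erase a, deriv m (2 * ρ a - 2 * ρ k)
        ≤ ∑ k ∈ (Finset.univ.erase b).erase a, deriv m (2 * ρ b - 2 * ρ k) :=
      Finset.sum_le_sum fun k _ => hm'_mono (by linarith)
    have hT : ∑ i ∈ (Finset.univ.erase b).erase a,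
          2 * Real.exp (φ i) * (1 - deriv m (2 * ρ i - 2 * ρ a))
        ≤ ∑ i ∈ (Finset.univ.erase b).erase a,
          2 * Real.exp (φ i) * (1 - deriv m (2 * ρ i - 2 * ρ b)) := by
      refine Finset.sum_le_sum fun i _ => ?_
      have h1 : deriv m (2 * ρ i - 2 * ρ b) ≤ deriv m (2 * ρ i - 2 * ρ a) :=
        hm'_mono (by linarith)
      have h2 := (Real.exp_pos (φ i)).le
      nlinarith
    have hE : Real.exp (φ a) ≤ Real.exp (φ b) := Real.exp_le_exp.mpr (hφ_mono a b hab)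
    have hsab : deriv m (2 * ρ a - 2 * ρ b) ≤ deriv m (2 * ρ b - 2 * ρ a) :=
      hm'_mono (by linarith)
    have hA_nn : 0 ≤ ∑ k ∈ (Finset.univ.erase b).erase a, deriv m (2 * ρ a - 2 * ρ k) :=
      Finset.sum_nonneg fun k _ => hd_nn _
    have hsab_nn := hd_nn (2 * ρ a - 2 * ρ b)
    have hprod : Real.exp (φ a) * (2 * deriv m (2 * ρ a - 2 * ρ b)
          + ∑ k ∈ (Finset.univ.erase b).erase a, deriv m (2 * ρ a - 2 * ρ k))
        ≤ Real.exp (φ b) * (2 * deriv m (2 * ρ b - 2 * ρ a)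
          + ∑ k ∈ (Finset.univ.erase b).erase a, deriv m (2 * ρ b - 2 * ρ k)) :=
      mul_le_mul hE (by linarith) (by linarith) (Real.exp_pos _).le
    nlinarith [hprod, hT]
  -- part 2
  refine ⟨⟨hpos, hmono⟩, fun j => ?_⟩
  have hdpos : (0:ℝ) < Real.exp (2 * (((j : ℕ) : ℝ) + 1) * ρ j)
      * ∏ i ∈ Finset.Ioi j, Real.exp (2 * ρ i) := by
    rw [hdenom j]; exact Real.exp_pos _
  constructor
  · rw [le_div_iff₀ hdpos, hdenom j]
    have h1 : Real.exp (L j) ≤ Real.exp (φ j) := Real.exp_le_exp.mpr (hφ_geL j)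
    have := hlow j
    linarith
  · rw [div_le_iff₀ hdpos, hdenom j]
    -- bound each piece
    have hYpos : (0:ℝ) < Real.exp (2 * (N:ℝ) * δ) * Real.exp (L j) := by positivity
    have hdiag : 2 * Real.exp (φ j)
          * (1 + ∑ k ∈ Finset.univ.erase j, deriv m (2 * ρ j - 2 * ρ k))
        ≤ 2 * (N:ℝ) * (Real.exp (2 * (N:ℝ) * δ) * Real.exp (L j)) := by
      have hb : (1:ℝ) + ∑ k ∈ Finset.univ.erase j, deriv m (2 * ρ j - 2 * ρ k) ≤ (N:ℝ) := by
        have h1 : ∑ k ∈ Finset.univ.erase j, deriv m (2 * ρ j - 2 * ρ k)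
            ≤ ∑ _k ∈ Finset.univ.erase j, (1:ℝ) := Finset.sum_le_sum fun k _ => hd_le _
        rw [Finset.sum_const, hcard_erase j, nsmul_eq_mul, mul_one,
          Nat.cast_sub (by omega : 1 ≤ N), Nat.cast_one] at h1
        linarith
      have hE : Real.exp (φ j) ≤ Real.exp (2 * (N:ℝ) * δ) * Real.exp (L j) := by
        rw [← Real.exp_add]
        refine Real.exp_le_exp.mpr ?_
        have := hφ_leL j
        nlinarith
      have h3 := mul_le_mul hE hb (by linarith [hsum_nn j]) hYpos.le
      nlinarith [hsum_nn j, Real.exp_pos (φ j)]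
    have hoff : ∀ i ∈ Finset.univ.erase j,
        2 * Real.exp (φ i) * (1 - deriv m (2 * ρ i - 2 * ρ j))
          ≤ 2 * (Real.exp (2 * (N:ℝ) * δ) * Real.exp (L j)) := by
      intro i _
      by_cases hc : 2 * ρ i ≤ 2 * ρ j + δ
      · have hLi := hL_close i j hc
        have hφi : φ i ≤ L j + (2 * (N:ℝ) - 1) * δ := by
          have := hφ_leL i
          linarith
        have hE : Real.exp (φ i) ≤ Real.exp (2 * (N:ℝ) * δ) * Real.exp (L j) := by
          rw [← Real.exp_add]
          refine Real.exp_le_exp.mpr ?_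
          nlinarith
        have h1 := hd_nn (2 * ρ i - 2 * ρ j)
        have h2 := hd_le (2 * ρ i - 2 * ρ j)
        nlinarith [Real.exp_pos (φ i)]
      · have h1 : deriv m (2 * ρ i - 2 * ρ j) = 1 := hd1 _ (by linarith)
        rw [h1]
        simp
        positivity
    have hoffsum : ∑ i ∈ Finset.univ.erase j,
          2 * Real.exp (φ i) * (1 - deriv m (2 * ρ i - 2 * ρ j))
        ≤ ((N:ℝ) - 1) * (2 * (Real.exp (2 * (N:ℝ) * δ) * Real.exp (L j))) := by
      have h1 := Finset.sum_le_card_nsmul (Finset.univ.erase j) _ _ hoff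
      rw [hcard_erase j, nsmul_eq_mul, Nat.cast_sub (by omega : 1 ≤ N), Nat.cast_one] at h1
      exact h1
    rw [hform j]
    have h4 : (2:ℝ) * (N:ℝ) * (Real.exp (2 * (N:ℝ) * δ) * Real.exp (L j))
        + ((N:ℝ) - 1) * (2 * (Real.exp (2 * (N:ℝ) * δ) * Real.exp (L j)))
        ≤ 4 * (N:ℝ) * Real.exp (2 * (N:ℝ) * δ) * Real.exp (L j) := by nlinarith [hYpos]
    linarith [hdiag, hoffsum, h4]
end

section
/- Let δ > 0, let M be a smoothed maximum function as in the context, let N ≥ 2, and let Φ, φ_i and μ_j be as in the context. Suppose ρ ∈ ℝ^N satisfies ρ₁ ≤ ρ₂ ≤ ⋯ ≤ ρ_N. Then for all indices 1 ≤ k < j ≤ N, (2N)^{−1/(2N)} · e^{−δ} · (μ_j(ρ)/μ_k(ρ))^{1/(2N)} ≤ e^{ρ_j − ρ_k} ≤ (2N)^{1/2} · e^{Nδ} · (μ_j(ρ)/μ_k(ρ))^{1/2}. -/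
open Real Finset Filter Topology

section SmoothedMax
variable {δ : ℝ} {M : ℝ × ℝ → ℝ}





lemma slice_convex (hM_convex : ConvexOn ℝ Set.univ M) (v : ℝ) :
    ConvexOn ℝ Set.univ (fun u => M (u, v)) := by
  refine ⟨convex_univ, fun x _ y _ a b ha hb hab => ?_⟩
  have := hM_convex.2 (Set.mem_univ (x, v)) (Set.mem_univ (y, v)) ha hb hab
  have hv : a * v + b * v = v := by rw [← add_mul, hab, one_mul]
  simpa [Prod.smul_mk, Prod.mk_add_mk, hv] using this

lemma M_flat (hδ : 0 < δ) (hM_max : ∀ u v : ℝ, δ ≤ |u - v| → M (u, v) = max u v)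
    {u v : ℝ} (h : u ≤ v - δ) : M (u, v) = v := by
  have h1 : δ ≤ |u - v| := by rw [abs_sub_comm]; rw [abs_of_nonneg (by linarith)]; linarith
  rw [hM_max u v h1, max_eq_right (by linarith)]

lemma M_mono_fst (hδ : 0 < δ) (hM_convex : ConvexOn ℝ Set.univ M)
    (hM_max : ∀ u v : ℝ, δ ≤ |u - v| → M (u, v) = max u v)
    (v : ℝ) : Monotone (fun u => M (u, v)) := by
  set f := fun u => M (u, v) with hf
  have hc := slice_convex hM_convex v
  intro u₁ u₂ h
  rcases eq_or_lt_of_le h with rfl | h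
  · exact le_refl _
  set a := min u₁ (v - δ) - 1 with ha
  have ha1 : a < u₁ := by simp only [ha]; have := min_le_left u₁ (v - δ); linarith
  have hfa : f a = v := M_flat hδ hM_max (by simp only [ha]; have := min_le_right u₁ (v-δ); linarith)
  have hfb : f (a - 1) = v := M_flat hδ hM_max
    (by simp only [ha]; have := min_le_right u₁ (v-δ); linarith)
  -- f u₁ ≥ v
  have h1 : (0:ℝ) ≤ (M (u₁, v) - v) / (u₁ - a) := by
    have := hc.slope_mono_adjacent (Set.mem_univ (a-1)) (Set.mem_univ u₁)
      (by linarith : a - 1 < a) ha1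
    have e1 : M (a, v) = v := hfa
    have e2 : M (a - 1, v) = v := hfb
    rw [e1, e2] at this
    simpa using this
  have hfu₁ : v ≤ M (u₁, v) := by
    have hpos : 0 < u₁ - a := by linarith
    nlinarith [mul_nonneg h1 hpos.le, div_mul_cancel₀ (M (u₁, v) - v) hpos.ne']
  have h2 := hc.slope_mono_adjacent (Set.mem_univ a) (Set.mem_univ u₂) ha1 h
  have e1 : M (a, v) = v := hfa
  rw [e1] at h2
  have h3 : (0:ℝ) ≤ (M (u₂, v) - M (u₁, v)) / (u₂ - u₁) := by
    refine le_trans ?_ h2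
    have hpos : 0 < u₁ - a := by linarith
    apply div_nonneg (by linarith) hpos.le
  have hpos : 0 < u₂ - u₁ := by linarith
  show M (u₁, v) ≤ M (u₂, v)
  nlinarith [mul_nonneg h3 hpos.le, div_mul_cancel₀ (M (u₂, v) - M (u₁, v)) hpos.ne']

lemma M_mono_fst' (hδ : 0 < δ) (hM_convex : ConvexOn ℝ Set.univ M)
    (hM_max : ∀ u v : ℝ, δ ≤ |u - v| → M (u, v) = max u v)
    {u u' : ℝ} (v : ℝ) (h : u ≤ u') : M (u, v) ≤ M (u', v) :=
  M_mono_fst hδ hM_convex hM_max v h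

lemma M_mono_snd (hδ : 0 < δ) (hM_convex : ConvexOn ℝ Set.univ M)
    (hM_max : ∀ u v : ℝ, δ ≤ |u - v| → M (u, v) = max u v)
    (hM_symm : ∀ u v : ℝ, M (u, v) = M (v, u))
    (u : ℝ) {v v' : ℝ} (h : v ≤ v') : M (u, v) ≤ M (u, v') := by
  rw [hM_symm u v, hM_symm u v']
  exact M_mono_fst hδ hM_convex hM_max u h

lemma M_lip_fst (hδ : 0 < δ) (hM_convex : ConvexOn ℝ Set.univ M)
    (hM_max : ∀ u v : ℝ, δ ≤ |u - v| → M (u, v) = max u v)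
    (hM_shift : ∀ u v a : ℝ, M (u + a, v + a) = M (u, v) + a)
    (hM_symm : ∀ u v : ℝ, M (u, v) = M (v, u))
    {u u' : ℝ} (v : ℝ) (h : u ≤ u') : M (u', v) ≤ M (u, v) + (u' - u) := by
  have h1 : M (u', v) ≤ M (u', v + (u' - u)) :=
    M_mono_snd hδ hM_convex hM_max hM_symm u' (by linarith)
  have h2 : M (u', v + (u' - u)) = M (u, v) + (u' - u) := by
    have := hM_shift u v (u' - u)
    rw [show u + (u' - u) = u' by ring] at this
    exact this
  linarith

lemma M_lip_snd (hδ : 0 < δ) (hM_convex : ConvexOn ℝ Set.univ M)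
    (hM_max : ∀ u v : ℝ, δ ≤ |u - v| → M (u, v) = max u v)
    (hM_shift : ∀ u v a : ℝ, M (u + a, v + a) = M (u, v) + a)
    (hM_symm : ∀ u v : ℝ, M (u, v) = M (v, u))
    (u : ℝ) {v v' : ℝ} (h : v ≤ v') : M (u, v') ≤ M (u, v) + (v' - v) := by
  rw [hM_symm u v, hM_symm u v']
  exact M_lip_fst hδ hM_convex hM_max hM_shift hM_symm u h



def phiF (M : ℝ × ℝ → ℝ) {N : ℕ} (i : Fin N) (ρ : Fin N → ℝ) : ℝ :=
  (∑ l ∈ Finset.univ.erase i, M (2 * ρ i, 2 * ρ l)) + 2 * ρ i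

lemma phi_diff {δ : ℝ} {M : ℝ × ℝ → ℝ}
    (hδ : 0 < δ) (hM_convex : ConvexOn ℝ Set.univ M)
    (hM_max : ∀ u v : ℝ, δ ≤ |u - v| → M (u, v) = max u v)
    (hM_shift : ∀ u v a : ℝ, M (u + a, v + a) = M (u, v) + a)
    (hM_symm : ∀ u v : ℝ, M (u, v) = M (v, u))
    {N : ℕ} {i k : Fin N} (hik : k ≠ i) (ρ : Fin N → ℝ) (h : ρ k ≤ ρ i) :
    2 * (ρ i - ρ k) ≤ phiF M i ρ - phiF M k ρ ∧
      phiF M i ρ - phiF M k ρ ≤ 2 * N * (ρ i - ρ k) := by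
  have hN1 : 1 ≤ N := Nat.one_le_of_lt (Fin.pos i)
  set S : Finset (Fin N) := (Finset.univ.erase i).erase k with hS
  have hkm : k ∈ Finset.univ.erase i := Finset.mem_erase.2 ⟨hik, Finset.mem_univ k⟩
  have him : i ∈ Finset.univ.erase k := Finset.mem_erase.2 ⟨(Ne.symm hik), Finset.mem_univ i⟩
  have h1 : ∑ l ∈ Finset.univ.erase i, M (2 * ρ i, 2 * ρ l)
      = (∑ l ∈ S, M (2 * ρ i, 2 * ρ l)) + M (2 * ρ i, 2 * ρ k) :=
    (Finset.sum_erase_add _ _ hkm).symm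
  have h2 : ∑ l ∈ Finset.univ.erase k, M (2 * ρ k, 2 * ρ l)
      = (∑ l ∈ S, M (2 * ρ k, 2 * ρ l)) + M (2 * ρ k, 2 * ρ i) := by
    rw [hS, Finset.erase_right_comm]
    exact (Finset.sum_erase_add _ _ him).symm
  have hsym : M (2 * ρ i, 2 * ρ k) = M (2 * ρ k, 2 * ρ i) := hM_symm _ _
  have hdiff : phiF M i ρ - phiF M k ρ
      = (∑ l ∈ S, (M (2 * ρ i, 2 * ρ l) - M (2 * ρ k, 2 * ρ l))) + 2 * (ρ i - ρ k) := by
    unfold phiF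
    rw [h1, h2, hsym, Finset.sum_sub_distrib]
    ring
  have hterm : ∀ l ∈ S, 0 ≤ M (2 * ρ i, 2 * ρ l) - M (2 * ρ k, 2 * ρ l) ∧
      M (2 * ρ i, 2 * ρ l) - M (2 * ρ k, 2 * ρ l) ≤ 2 * (ρ i - ρ k) := by
    intro l _
    constructor
    · have := M_mono_fst' hδ hM_convex hM_max (2 * ρ l)
        (by linarith : 2 * ρ k ≤ 2 * ρ i)
      linarith
    · have := M_lip_fst hδ hM_convex hM_max hM_shift hM_symm (2 * ρ l)
        (by linarith : 2 * ρ k ≤ 2 * ρ i)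
      linarith
  have hcard : (S.card : ℝ) ≤ (N : ℝ) - 1 := by
    have : S.card ≤ (Finset.univ.erase i).card := Finset.card_le_card (Finset.erase_subset _ _)
    have h2 : (Finset.univ.erase i).card = N - 1 := by
      rw [Finset.card_erase_of_mem (Finset.mem_univ i), Finset.card_univ, Fintype.card_fin]
    rw [h2] at this
    calc (S.card : ℝ) ≤ ((N - 1 : ℕ) : ℝ) := by exact_mod_cast this
    _ = (N : ℝ) - 1 := by rw [Nat.cast_sub hN1]; simp
  constructor
  · rw [hdiff]
    have : 0 ≤ ∑ l ∈ S, (M (2 * ρ i, 2 * ρ l) - M (2 * ρ k, 2 * ρ l)) :=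
      Finset.sum_nonneg fun l hl => (hterm l hl).1
    linarith
  · rw [hdiff]
    have hs : ∑ l ∈ S, (M (2 * ρ i, 2 * ρ l) - M (2 * ρ k, 2 * ρ l))
        ≤ S.card * (2 * (ρ i - ρ k)) := by
      calc ∑ l ∈ S, (M (2 * ρ i, 2 * ρ l) - M (2 * ρ k, 2 * ρ l))
          ≤ ∑ _l ∈ S, 2 * (ρ i - ρ k) := Finset.sum_le_sum fun l hl => (hterm l hl).2
        _ = S.card * (2 * (ρ i - ρ k)) := by rw [Finset.sum_const, nsmul_eq_mul]
    nlinarith [sub_nonneg.2 h, hcard, mul_le_mul_of_nonneg_right hcard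
      (by linarith : (0:ℝ) ≤ 2 * (ρ i - ρ k))]

lemma mu_bounds (hδ : 0 < δ)
    (hM_smooth : ContDiff ℝ (⊤ : ℕ∞) M)
    (hM_convex : ConvexOn ℝ Set.univ M)
    (hM_max : ∀ u v : ℝ, δ ≤ |u - v| → M (u, v) = max u v)
    (hM_shift : ∀ u v a : ℝ, M (u + a, v + a) = M (u, v) + a)
    (hM_symm : ∀ u v : ℝ, M (u, v) = M (v, u))
    {N : ℕ} (hN : 2 ≤ N)
    (Φ : (Fin N → ℝ) → ℝ)
    (hΦ : ∀ ρ : Fin N → ℝ, Φ ρ = ∑ i, Real.exp (phiF M i ρ))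
    (ρ : Fin N → ℝ) (j : Fin N) :
    2 * Real.exp (phiF M j ρ) ≤ fderiv ℝ Φ ρ (Pi.single j 1) ∧
      fderiv ℝ Φ ρ (Pi.single j 1) ≤ 4 * N * Real.exp (N * δ) * Real.exp (phiF M j ρ) := by
  have hMd : Differentiable ℝ M := hM_smooth.differentiable (by simp)
  -- differentiability of Φ
  have hφd : ∀ i : Fin N, Differentiable ℝ (fun ρ' : Fin N → ℝ => phiF M i ρ') := by
    intro i
    unfold phiF
    apply Differentiable.add
    · apply Differentiable.fun_sum
      intro l _
      exact hMd.comp ((((ContinuousLinearMap.proj i : (Fin N → ℝ) →L[ℝ] ℝ).differentiable).const_mul 2).prodMk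
        (((ContinuousLinearMap.proj l : (Fin N → ℝ) →L[ℝ] ℝ).differentiable).const_mul 2))
    · exact ((ContinuousLinearMap.proj i : (Fin N → ℝ) →L[ℝ] ℝ).differentiable).const_mul 2
  have hΦdef : Φ = fun ρ' => ∑ i, Real.exp (phiF M i ρ') := funext hΦ
  have hΦd : Differentiable ℝ Φ := by
    rw [hΦdef]; exact Differentiable.fun_sum fun i _ => (hφd i).exp
  -- the line
  set c : ℝ → Fin N → ℝ := fun t => ρ + t • (Pi.single j (1:ℝ) : Fin N → ℝ) with hcdef
  have hc0 : c 0 = ρ := by simp [hcdef]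
  have hct : ∀ (t : ℝ) (l : Fin N), c t l = if l = j then ρ l + t else ρ l := by
    intro t l
    by_cases h : l = j <;> simp [hcdef, Pi.single_apply, h]
  have hg : HasDerivAt (fun t => Φ (c t)) (fderiv ℝ Φ ρ (Pi.single j 1)) 0 := by
    have h1 : HasDerivAt c (Pi.single j 1) 0 := by
      rw [hcdef]
      simpa using ((hasDerivAt_id (0:ℝ)).smul_const (Pi.single j (1:ℝ) : Fin N → ℝ)).const_add ρ
    have h2 : HasFDerivAt Φ (fderiv ℝ Φ ρ) (c 0) := by rw [hc0]; exact (hΦd ρ).hasFDerivAt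
    exact h2.comp_hasDerivAt 0 h1
  have htend : Tendsto (slope (fun t => Φ (c t)) 0) (𝓝[>] (0:ℝ))
      (𝓝 (fderiv ℝ Φ ρ (Pi.single j 1))) :=
    (hasDerivAt_iff_tendsto_slope.mp hg).mono_left
      (nhdsWithin_mono 0 (fun x hx => Set.mem_compl_singleton_iff.2 (ne_of_gt hx)))
  -- increments of phiF along the line
  have hsplit : ∀ (i : Fin N), i ≠ j → ∀ t : ℝ,
      phiF M i (c t) = phiF M i ρ + (M (2 * ρ i, 2 * (ρ j + t)) - M (2 * ρ i, 2 * ρ j)) := by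
    intro i hij t
    have hjm : j ∈ Finset.univ.erase i := Finset.mem_erase.2 ⟨Ne.symm hij, Finset.mem_univ j⟩
    have e1 : ∀ ρ' : Fin N → ℝ, phiF M i ρ' =
        (∑ l ∈ (Finset.univ.erase i).erase j, M (2 * ρ' i, 2 * ρ' l)) + M (2 * ρ' i, 2 * ρ' j)
          + 2 * ρ' i := by
      intro ρ'
      unfold phiF
      rw [Finset.sum_erase_add _ _ hjm]
    rw [e1, e1]
    have hcti : c t i = ρ i := by rw [hct]; simp [hij]
    have hctj : c t j = ρ j + t := by rw [hct]; simp
    have e2 : ∑ l ∈ (Finset.univ.erase i).erase j, M (2 * c t i, 2 * c t l)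
        = ∑ l ∈ (Finset.univ.erase i).erase j, M (2 * ρ i, 2 * ρ l) := by
      apply Finset.sum_congr rfl
      intro l hl
      have hlj : l ≠ j := (Finset.mem_erase.1 hl).1
      rw [hcti, hct]; simp [hlj]
    rw [e2, hcti, hctj]
    ring
  have hsplitj : ∀ t : ℝ,
      phiF M j (c t) = (∑ l ∈ Finset.univ.erase j, M (2 * (ρ j + t), 2 * ρ l)) + 2 * (ρ j + t) := by
    intro t
    unfold phiF
    have hctj : c t j = ρ j + t := by rw [hct]; simp
    rw [hctj]
    congr 1
    apply Finset.sum_congr rfl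
    intro l hl
    have hlj : l ≠ j := (Finset.mem_erase.1 hl).1
    rw [hct]; simp [hlj]

  -- increment facts
  have h2mul : ∀ t : ℝ, 2 * (ρ j + t) = 2 * ρ j + 2 * t := fun t => by ring
  have hMup : ∀ (i : Fin N) (t : ℝ), 0 ≤ t →
      0 ≤ M (2 * ρ i, 2 * (ρ j + t)) - M (2 * ρ i, 2 * ρ j) ∧
      M (2 * ρ i, 2 * (ρ j + t)) - M (2 * ρ i, 2 * ρ j) ≤ 2 * t := by
    intro i t ht
    constructor
    · have := M_mono_snd hδ hM_convex hM_max hM_symm (2 * ρ i) (show 2 * ρ j ≤ 2 * (ρ j + t) by linarith)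
      linarith
    · have := M_lip_snd hδ hM_convex hM_max hM_shift hM_symm (2 * ρ i) (show 2 * ρ j ≤ 2 * (ρ j + t) by linarith)
      linarith
  have hcardj : ((Finset.univ.erase j).card : ℝ) = (N : ℝ) - 1 := by
    rw [Finset.card_erase_of_mem (Finset.mem_univ j), Finset.card_univ, Fintype.card_fin]
    have h1 : 1 ≤ N := le_trans one_le_two hN
    rw [Nat.cast_sub h1]; simp
  have hjq : ∀ t : ℝ, 0 ≤ t →
      phiF M j ρ + 2 * t ≤ phiF M j (c t) ∧ phiF M j (c t) ≤ phiF M j ρ + 2 * N * t := by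
    intro t ht
    rw [hsplitj t]
    constructor
    · have hsum : ∑ l ∈ Finset.univ.erase j, M (2 * ρ j, 2 * ρ l)
          ≤ ∑ l ∈ Finset.univ.erase j, M (2 * (ρ j + t), 2 * ρ l) :=
        Finset.sum_le_sum fun l _ =>
          M_mono_fst' hδ hM_convex hM_max (2 * ρ l) (by linarith : 2 * ρ j ≤ 2 * (ρ j + t))
      unfold phiF
      linarith
    · have hsum : ∑ l ∈ Finset.univ.erase j, M (2 * (ρ j + t), 2 * ρ l)
          ≤ ∑ l ∈ Finset.univ.erase j, (M (2 * ρ j, 2 * ρ l) + 2 * t) :=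
        Finset.sum_le_sum fun l _ => by
          have := M_lip_fst hδ hM_convex hM_max hM_shift hM_symm (2 * ρ l) (by linarith : 2 * ρ j ≤ 2 * (ρ j + t))
          linarith
      rw [Finset.sum_add_distrib, Finset.sum_const, nsmul_eq_mul] at hsum
      rw [hcardj] at hsum
      unfold phiF
      have hNR : (1 : ℝ) ≤ (N : ℝ) := by exact_mod_cast le_trans one_le_two hN
      nlinarith
  have hfar0 : ∀ (i : Fin N), i ≠ j → ρ j + δ / 2 < ρ i → ∀ t : ℝ, 0 ≤ t →
      t ≤ ρ i - ρ j - δ / 2 → phiF M i (c t) = phiF M i ρ := by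
    intro i hij hfar t ht htle
    rw [hsplit i hij t]
    have e1 : M (2 * ρ i, 2 * (ρ j + t)) = 2 * ρ i := by
      rw [hM_max _ _ (by rw [abs_of_nonneg (by linarith)]; linarith)]
      exact max_eq_left (by linarith)
    have e2 : M (2 * ρ i, 2 * ρ j) = 2 * ρ i := by
      rw [hM_max _ _ (by rw [abs_of_nonneg (by linarith)]; linarith)]
      exact max_eq_left (by linarith)
    rw [e1, e2]; ring
  have hnear : ∀ i : Fin N, i ≠ j → ρ i ≤ ρ j + δ / 2 →
      phiF M i ρ ≤ phiF M j ρ + N * δ := by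
    intro i hij hle
    have hNδ : 0 ≤ (N : ℝ) * δ := by positivity
    by_cases hρij : ρ i ≤ ρ j
    · have := (phi_diff hδ hM_convex hM_max hM_shift hM_symm hij ρ hρij).1
      linarith
    · push_neg at hρij
      have h2 := (phi_diff hδ hM_convex hM_max hM_shift hM_symm (Ne.symm hij) ρ hρij.le).2
      have hd : ρ i - ρ j ≤ δ / 2 := by linarith
      have hNR : (0 : ℝ) ≤ (N : ℝ) := Nat.cast_nonneg N
      nlinarith
  -- lower bound
  set Ej := Real.exp (phiF M j ρ) with hEj
  have hEjpos : 0 < Ej := Real.exp_pos _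
  have hq1 : HasDerivAt (fun t : ℝ => Ej * Real.exp (2 * t)) (2 * Ej) 0 := by
    have h1 : HasDerivAt (fun t : ℝ => 2 * t) 2 0 := by
      simpa using (hasDerivAt_id (0:ℝ)).const_mul (2:ℝ)
    have h2 := (h1.exp).const_mul Ej
    convert h2 using 1
    · rfl
    · rfl
    simp [Real.exp_zero]
    ring
  have htq1 : Tendsto (slope (fun t : ℝ => Ej * Real.exp (2 * t)) 0) (𝓝[>] (0:ℝ)) (𝓝 (2 * Ej)) :=
    (hasDerivAt_iff_tendsto_slope.mp hq1).mono_left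
      (nhdsWithin_mono 0 (fun x hx => Set.mem_compl_singleton_iff.2 (ne_of_gt hx)))
  have hsum_split : ∀ x : Fin N → ℝ, ∑ i, x i = (∑ i ∈ Finset.univ.erase j, x i) + x j :=
    fun x => (Finset.sum_erase_add _ _ (Finset.mem_univ j)).symm
  have hlow : 2 * Ej ≤ fderiv ℝ Φ ρ (Pi.single j 1) := by
    refine le_of_tendsto_of_tendsto htq1 htend ?_
    filter_upwards [self_mem_nhdsWithin] with t ht
    have ht0 : (0:ℝ) < t := ht
    rw [slope_def_field, slope_def_field, sub_zero]
    rw [div_le_div_iff_of_pos_right ht0]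
    rw [hΦ (c t), hΦ (c 0), hc0] -- hc0 rewrites c 0 = ρ? hΦ (c 0) then c 0 arg...
    have hterm : ∀ i : Fin N, Real.exp (phiF M i ρ) ≤ Real.exp (phiF M i (c t)) := by
      intro i
      apply Real.exp_le_exp.2
      by_cases hij : i = j
      · subst hij
        have := (hjq t ht0.le).1
        linarith
      · rw [hsplit i hij t]
        have := (hMup i t ht0.le).1
        linarith
    have hj' : Ej * Real.exp (2 * t) ≤ Real.exp (phiF M j (c t)) := by
      rw [hEj, ← Real.exp_add]
      exact Real.exp_le_exp.2 (by linarith [(hjq t ht0.le).1])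
    rw [hsum_split (fun i => Real.exp (phiF M i (c t))),
        hsum_split (fun i => Real.exp (phiF M i ρ))]
    have hs : ∑ i ∈ Finset.univ.erase j, Real.exp (phiF M i ρ)
        ≤ ∑ i ∈ Finset.univ.erase j, Real.exp (phiF M i (c t)) :=
      Finset.sum_le_sum fun i _ => hterm i
    have : Real.exp (phiF M j ρ) = Ej := rfl
    simp only [mul_zero, Real.exp_zero, mul_one]
    linarith [hj']
  -- upper bound
  set Cf := Real.exp (phiF M j ρ + N * δ) with hCf
  have hCfpos : 0 < Cf := Real.exp_pos _
  set q2 : ℝ → ℝ := fun t => Ej * Real.exp (2 * N * t) + ((N:ℝ) - 1) * (Cf * Real.exp (2 * t))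
    with hq2def
  have hq2 : HasDerivAt q2 (2 * N * Ej + ((N:ℝ) - 1) * (2 * Cf)) 0 := by
    have h1 : HasDerivAt (fun t : ℝ => 2 * (N:ℝ) * t) (2 * N) 0 := by
      simpa using (hasDerivAt_id (0:ℝ)).const_mul (2 * (N:ℝ))
    have h2 : HasDerivAt (fun t : ℝ => 2 * t) 2 0 := by
      simpa using (hasDerivAt_id (0:ℝ)).const_mul (2:ℝ)
    have h3 := (h1.exp).const_mul Ej
    have h4 := ((h2.exp).const_mul Cf).const_mul ((N:ℝ) - 1)
    have h5 := h3.add h4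
    rw [hq2def]
    convert h5 using 1
    · rfl
    · rfl
    · rfl
    simp [Real.exp_zero]
    ring
  have htq2 : Tendsto (slope q2 0) (𝓝[>] (0:ℝ)) (𝓝 (2 * N * Ej + ((N:ℝ) - 1) * (2 * Cf))) :=
    (hasDerivAt_iff_tendsto_slope.mp hq2).mono_left
      (nhdsWithin_mono 0 (fun x hx => Set.mem_compl_singleton_iff.2 (ne_of_gt hx)))
  have hfarEv : ∀ᶠ t in 𝓝[>] (0:ℝ), ∀ i : Fin N, i ≠ j → ρ j + δ / 2 < ρ i →
      t ≤ ρ i - ρ j - δ / 2 := by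
    rw [Filter.eventually_all]
    intro i
    by_cases hfar : ρ j + δ / 2 < ρ i
    · have hmem : Set.Ioc (0:ℝ) (ρ i - ρ j - δ / 2) ∈ 𝓝[>] (0:ℝ) :=
        Ioc_mem_nhdsGT_of_mem ⟨le_refl 0, by linarith⟩
      filter_upwards [hmem] with t htm
      exact fun _ _ => htm.2
    · filter_upwards with t
      exact fun _ h2 => absurd h2 hfar
  have hupp : fderiv ℝ Φ ρ (Pi.single j 1) ≤ 2 * N * Ej + ((N:ℝ) - 1) * (2 * Cf) := by
    refine le_of_tendsto_of_tendsto htend htq2 ?_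
    filter_upwards [self_mem_nhdsWithin, hfarEv] with t ht hfart
    have ht0 : (0:ℝ) < t := ht
    have hexp2t : (1:ℝ) ≤ Real.exp (2 * t) := Real.one_le_exp (by linarith)
    rw [slope_def_field, slope_def_field, sub_zero]
    rw [div_le_div_iff_of_pos_right ht0]
    rw [hΦ (c t), hΦ (c 0), hc0]
    rw [hsum_split (fun i => Real.exp (phiF M i (c t))),
        hsum_split (fun i => Real.exp (phiF M i ρ))]
    have hjterm : Real.exp (phiF M j (c t)) ≤ Ej * Real.exp (2 * N * t) := by
      rw [hEj, ← Real.exp_add]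
      exact Real.exp_le_exp.2 (by linarith [(hjq t ht0.le).2])
    have hiterm : ∀ i ∈ Finset.univ.erase j,
        Real.exp (phiF M i (c t)) - Real.exp (phiF M i ρ)
          ≤ Cf * (Real.exp (2 * t) - 1) := by
      intro i hi
      have hij : i ≠ j := (Finset.mem_erase.1 hi).1
      by_cases hfar : ρ j + δ / 2 < ρ i
      · rw [hfar0 i hij hfar t ht0.le (hfart i hij hfar)]
        simp only [sub_self]
        nlinarith [hCfpos, hexp2t]
      · push_neg at hfar
        have h1 : Real.exp (phiF M i (c t)) ≤ Real.exp (phiF M i ρ) * Real.exp (2 * t) := by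
          rw [← Real.exp_add]
          apply Real.exp_le_exp.2
          rw [hsplit i hij t]
          linarith [(hMup i t ht0.le).2]
        have h2 : Real.exp (phiF M i ρ) ≤ Cf := by
          rw [hCf]
          exact Real.exp_le_exp.2 (hnear i hij hfar)
        nlinarith [Real.exp_pos (phiF M i ρ)]
    have hsumU : ∑ i ∈ Finset.univ.erase j, Real.exp (phiF M i (c t))
        ≤ (∑ i ∈ Finset.univ.erase j, Real.exp (phiF M i ρ))
          + ((N:ℝ) - 1) * (Cf * (Real.exp (2 * t) - 1)) := by
      have := Finset.sum_le_sum (fun i hi => (by linarith [hiterm i hi] :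
        Real.exp (phiF M i (c t)) ≤ Real.exp (phiF M i ρ) + Cf * (Real.exp (2 * t) - 1)))
      rw [Finset.sum_add_distrib, Finset.sum_const, nsmul_eq_mul, hcardj] at this
      linarith
    have hq2t : q2 t - q2 0 = (Ej * Real.exp (2 * N * t) - Ej)
        + ((N:ℝ) - 1) * (Cf * (Real.exp (2 * t) - 1)) := by
      rw [hq2def]
      simp [Real.exp_zero]
      ring
    have : Real.exp (phiF M j ρ) = Ej := rfl
    linarith [hjterm, hsumU]
  refine ⟨hlow, ?_⟩
  refine le_trans hupp ?_
  have hCfEj : Cf = Ej * Real.exp ((N:ℝ) * δ) := by rw [hCf, hEj, Real.exp_add]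
  have h1 : (1:ℝ) ≤ Real.exp ((N:ℝ) * δ) := Real.one_le_exp (by positivity)
  have hNR : (1:ℝ) ≤ (N : ℝ) := by exact_mod_cast le_trans one_le_two hN
  rw [hCfEj]
  have e1 : 2 * (N:ℝ) * Ej ≤ 2 * (N:ℝ) * Real.exp ((N:ℝ) * δ) * Ej := by
    have h0 : (0:ℝ) ≤ 2 * (N:ℝ) * Ej := by positivity
    nlinarith [mul_le_mul_of_nonneg_left h1 h0]
  have e2 : ((N:ℝ) - 1) * (2 * (Ej * Real.exp ((N:ℝ) * δ)))
      ≤ 2 * (N:ℝ) * Real.exp ((N:ℝ) * δ) * Ej := by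
    nlinarith [mul_pos hEjpos (Real.exp_pos ((N:ℝ) * δ))]
  linarith



end SmoothedMax

set_option maxHeartbeats 1000000 in
/-- With `Φ` and `μⱼ = ∂Φ/∂ρⱼ` as in Statement 7 and
`ρ₁ ≤ … ≤ ρ_N`, for all `k < j`:
`(2N)^{−1/(2N)}·e^{−δ}·(μⱼ/μ_k)^{1/(2N)} ≤ e^{ρⱼ−ρ_k} ≤ (2N)^{1/2}·e^{Nδ}·(μⱼ/μ_k)^{1/2}`. -/
theorem stmt_8 (δ : ℝ) (hδ : 0 < δ) (M : ℝ × ℝ → ℝ)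
    (hM_smooth : ContDiff ℝ (⊤ : ℕ∞) M)
    (hM_convex : ConvexOn ℝ Set.univ M)
    (hM_max : ∀ u v : ℝ, δ ≤ |u - v| → M (u, v) = max u v)
    (hM_shift : ∀ u v a : ℝ, M (u + a, v + a) = M (u, v) + a)
    (hM_symm : ∀ u v : ℝ, M (u, v) = M (v, u))
    (N : ℕ) (hN : 2 ≤ N)
    (Φ : (Fin N → ℝ) → ℝ)
    (hΦ : ∀ ρ : Fin N → ℝ,
      Φ ρ = ∑ i, Real.exp ((∑ j ∈ Finset.univ.erase i, M (2 * ρ i, 2 * ρ j)) + 2 * ρ i))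
    (μ : (Fin N → ℝ) → Fin N → ℝ)
    (hμ : ∀ (ρ : Fin N → ℝ) (j : Fin N), μ ρ j = fderiv ℝ Φ ρ (Pi.single j 1))
    (ρ : Fin N → ℝ) (hρ : Monotone ρ) :
    ∀ k j : Fin N, k < j →
      (2 * (N : ℝ)) ^ (-(1 / (2 * (N : ℝ)))) * Real.exp (-δ) *
          (μ ρ j / μ ρ k) ^ (1 / (2 * (N : ℝ))) ≤ Real.exp (ρ j - ρ k) ∧
      Real.exp (ρ j - ρ k) ≤
        (2 * (N : ℝ)) ^ ((1 : ℝ) / 2) * Real.exp ((N : ℝ) * δ) *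
          (μ ρ j / μ ρ k) ^ ((1 : ℝ) / 2) := by
  intro k j hkj
  have hΦ' : ∀ ρ' : Fin N → ℝ, Φ ρ' = ∑ i, Real.exp (phiF M i ρ') := hΦ
  have hkj' : k ≠ j := ne_of_lt hkj
  have hd0 : ρ k ≤ ρ j := hρ (le_of_lt hkj)
  set d := ρ j - ρ k with hdd
  have hd : 0 ≤ d := by simp [hdd]; linarith
  set Nr := (N : ℝ) with hNr
  have hNr2 : (2:ℝ) ≤ Nr := by rw [hNr]; exact_mod_cast hN
  have hNrpos : 0 < Nr := by linarith
  set Ej := Real.exp (phiF M j ρ) with hEj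
  set Ek := Real.exp (phiF M k ρ) with hEk
  have hEjpos : 0 < Ej := Real.exp_pos _
  have hEkpos : 0 < Ek := Real.exp_pos _
  have hphid := phi_diff hδ hM_convex hM_max hM_shift hM_symm hkj' ρ hd0
  have hEjk1 : Real.exp (2 * d) * Ek ≤ Ej := by
    rw [hEj, hEk, ← Real.exp_add]
    apply Real.exp_le_exp.2
    simp only [hdd]
    linarith [hphid.1]
  have hEjk2 : Ej ≤ Real.exp (2 * Nr * d) * Ek := by
    rw [hEj, hEk, ← Real.exp_add]
    apply Real.exp_le_exp.2
    simp only [hdd, hNr]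
    linarith [hphid.2]
  have hmuj := mu_bounds hδ hM_smooth hM_convex hM_max hM_shift hM_symm hN Φ hΦ' ρ j
  have hmuk := mu_bounds hδ hM_smooth hM_convex hM_max hM_shift hM_symm hN Φ hΦ' ρ k
  rw [← hμ ρ j] at hmuj
  rw [← hμ ρ k] at hmuk
  have hE : (1:ℝ) ≤ Real.exp (Nr * δ) := Real.one_le_exp (by positivity)
  have hEpos : (0:ℝ) < Real.exp (Nr * δ) := Real.exp_pos _
  have hmujpos : 0 < μ ρ j := lt_of_lt_of_le (by positivity) hmuj.1
  have hmukpos : 0 < μ ρ k := lt_of_lt_of_le (by positivity) hmuk.1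
  set R := μ ρ j / μ ρ k with hR
  have hRpos : 0 < R := div_pos hmujpos hmukpos
  -- key scalar bounds
  have hRlb : Real.exp (2 * d) ≤ 2 * Nr * Real.exp (Nr * δ) * R := by
    rw [hR]
    rw [mul_div_assoc']
    rw [le_div_iff₀ hmukpos]
    have h1 : 2 * Real.exp (2 * d) * Ek ≤ μ ρ j := by nlinarith [hmuj.1]
    nlinarith [hmuk.2, Real.exp_pos (2 * d)]
  have hRub : R ≤ 2 * Nr * Real.exp (Nr * δ) * Real.exp (2 * Nr * d) := by
    rw [hR, div_le_iff₀ hmukpos]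
    have h1 : μ ρ j ≤ 4 * Nr * Real.exp (Nr * δ) * (Real.exp (2 * Nr * d) * Ek) := by
      nlinarith [hmuj.2, Real.exp_pos (Nr * δ)]
    nlinarith [hmuk.1, Real.exp_pos (Nr * δ), Real.exp_pos (2 * Nr * d), hEkpos]
  constructor
  · -- lower bound, raise to power 2N
    set n : ℕ := 2 * N with hn
    have hnne : n ≠ 0 := by positivity
    have hnr : (n : ℝ) = 2 * Nr := by rw [hn, hNr]; push_cast; ring
    apply le_of_pow_le_pow_left₀ hnne (le_of_lt (Real.exp_pos _))
    have hb1 : (0:ℝ) < 2 * Nr := by linarith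
    rw [mul_pow, mul_pow]
    have e1 : ((2 * Nr) ^ (-(1 / (2 * Nr)))) ^ n = (2 * Nr)⁻¹ := by
      rw [← Real.rpow_natCast ((2 * Nr) ^ (-(1 / (2 * Nr)))) n, ← Real.rpow_mul hb1.le, hnr]
      rw [show -(1 / (2 * Nr)) * (2 * Nr) = -1 by field_simp]
      rw [Real.rpow_neg_one]
    have e2 : (Real.exp (-δ)) ^ n = Real.exp (-(2 * Nr) * δ) := by
      rw [← Real.exp_nat_mul, hnr]; ring_nf
    have e3 : (R ^ (1 / (2 * Nr))) ^ n = R := by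
      rw [← Real.rpow_natCast (R ^ (1 / (2 * Nr))) n, ← Real.rpow_mul hRpos.le, hnr]
      rw [show 1 / (2 * Nr) * (2 * Nr) = 1 by field_simp]
      exact Real.rpow_one R
    have e4 : (Real.exp d) ^ n = Real.exp (2 * Nr * d) := by
      rw [← Real.exp_nat_mul, hnr]
    rw [e1, e2, e3, e4]
    rw [inv_mul_eq_div, div_mul_eq_mul_div, div_le_iff₀ hb1]
    calc Real.exp (-(2 * Nr) * δ) * R
        ≤ Real.exp (-(2 * Nr) * δ) * (2 * Nr * Real.exp (Nr * δ) * Real.exp (2 * Nr * d)) := by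
          nlinarith [Real.exp_pos (-(2 * Nr) * δ), hRub]
      _ = Real.exp (2 * Nr * d) * (2 * Nr) * Real.exp (-(2 * Nr) * δ + Nr * δ) := by
          rw [Real.exp_add]; ring
      _ ≤ Real.exp (2 * Nr * d) * (2 * Nr) * 1 := by
          have : Real.exp (-(2 * Nr) * δ + Nr * δ) ≤ 1 := by
            rw [← Real.exp_zero]
            apply Real.exp_le_exp.2
            nlinarith
          nlinarith [Real.exp_pos (2 * Nr * d)]
      _ = Real.exp (2 * Nr * d) * (2 * Nr) := by ring
  · -- upper bound, square
    apply le_of_pow_le_pow_left₀ (two_ne_zero) (by positivity)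
    rw [mul_pow, mul_pow]
    have hb1 : (0:ℝ) < 2 * Nr := by linarith
    have e1 : ((2 * Nr) ^ ((1:ℝ) / 2)) ^ 2 = 2 * Nr := by
      rw [← Real.rpow_natCast ((2 * Nr) ^ ((1:ℝ)/2)) 2, ← Real.rpow_mul hb1.le]
      norm_num
    have e2 : (Real.exp (Nr * δ)) ^ 2 = Real.exp (2 * (Nr * δ)) := by
      rw [← Real.exp_nat_mul]; norm_num
    have e3 : (R ^ ((1:ℝ) / 2)) ^ 2 = R := by
      rw [← Real.rpow_natCast (R ^ ((1:ℝ)/2)) 2, ← Real.rpow_mul hRpos.le]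
      norm_num
    have e4 : (Real.exp d) ^ 2 = Real.exp (2 * d) := by
      rw [← Real.exp_nat_mul]; norm_num
    rw [e1, e2, e3, e4]
    calc Real.exp (2 * d) ≤ 2 * Nr * Real.exp (Nr * δ) * R := hRlb
      _ ≤ 2 * Nr * Real.exp (2 * (Nr * δ)) * R := by
        have : Real.exp (Nr * δ) ≤ Real.exp (2 * (Nr * δ)) := by
          apply Real.exp_le_exp.2; nlinarith
        nlinarith [hRpos]
end
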